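/- arXiv:1904.00041 — 4 statements merged into one kernel-verified Lean document; each statement's English description precedes it below -/
import Mathlib

section
/- Let X be a complex Banach space, q ≥ 2 and ρ > 0. Suppose that every one-variable X-valued polynomial f(z) = ∑_{k=0}^N x_k z^k satisfies (∑_{k=0}^N ‖x_k‖^q ρ^{qk})^{1/q} ≤ (∫_T ‖f(z)‖^q dz)^{1/q}. Then for every n ∈ ℕ, every X-valued polynomial P(z) = ∑_α x_α z^α of n variables satisfies (∑_α ‖x_α‖^q ρ^{q|α|})^{1/q} ≤ (∫_{T^n} ‖P(z)‖^q dz)^{1/q}. -/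
open MeasureTheory Finset
open scoped ENNReal NNReal

noncomputable section

instance : MeasurableSpace Circle := borel Circle
instance : BorelSpace Circle := ⟨rfl⟩

/-- The normalized Haar (probability) measure on the circle group `𝕋`. -/
def μC : Measure Circle := (Measure.haar (Set.univ : Set Circle))⁻¹ • Measure.haar

/-- The normalized Haar measure on the polytorus `𝕋ⁿ`
(the product of `n` copies of the normalized Haar measure on the circle). -/
def μT (n : ℕ) : Measure (Fin n → Circle) := Measure.pi fun _ => μC

instance : IsProbabilityMeasure μC := by
  constructor
  rw [μC, Measure.smul_apply, smul_eq_mul]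
  exact ENNReal.inv_mul_cancel
    ((IsOpen.measure_pos Measure.haar isOpen_univ Set.univ_nonempty).ne')
    (measure_ne_top _ _)

instance (n : ℕ) : IsProbabilityMeasure (μT n) := by
  rw [μT]; infer_instance

lemma cont_integrable {α : Type*} [TopologicalSpace α] [MeasurableSpace α]
    [OpensMeasurableSpace α] [T2Space α] [CompactSpace α] (μ : Measure α) [IsFiniteMeasure μ]
    {f : α → ℝ} (hf : Continuous f) : Integrable f μ := by
  have := hf.continuousOn.integrableOn_compact (μ := μ) (isCompact_univ (X := α))
  rwa [integrableOn_univ] at this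

lemma sum_snoc_reindex {n : ℕ} (S : Finset (Fin (n+1) → ℕ)) {G : Type*} [AddCommMonoid G]
    (g : (Fin (n+1) → ℕ) → G) :
    ∑ α ∈ S, g α =
      ∑ p ∈ (S.image Fin.init) ×ˢ Finset.range ((S.sup fun α => α (Fin.last n)) + 1),
        (if Fin.snoc p.1 p.2 ∈ S then g (Fin.snoc p.1 p.2) else 0) := by
  have h2 : ((S.image Fin.init) ×ˢ Finset.range ((S.sup fun α => α (Fin.last n)) + 1)).filter
      (fun p : (Fin n → ℕ) × ℕ => Fin.snoc p.1 p.2 ∈ S)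
      = S.image (fun α => (Fin.init α, α (Fin.last n))) := by
    ext p
    simp only [Finset.mem_filter, Finset.mem_product, Finset.mem_image, Finset.mem_range]
    constructor
    · rintro ⟨⟨-, -⟩, hs⟩
      exact ⟨Fin.snoc p.1 p.2, hs, by simp [Fin.init_snoc, Fin.snoc_last]⟩
    · rintro ⟨α, hα, rfl⟩
      refine ⟨⟨⟨α, hα, rfl⟩, ?_⟩, by rwa [Fin.snoc_init_self]⟩
      exact Nat.lt_succ_of_le (Finset.le_sup (f := fun α => α (Fin.last n)) hα)
  rw [← Finset.sum_filter, h2, Finset.sum_image]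
  · exact Finset.sum_congr rfl fun α _ => by rw [Fin.snoc_init_self]
  · intro a _ b _ h
    have : Fin.snoc (Fin.init a) (a (Fin.last n)) = Fin.snoc (Fin.init b) (b (Fin.last n)) := by
      rw [(Prod.mk.injEq _ _ _ _).mp h |>.1, (Prod.mk.injEq _ _ _ _).mp h |>.2]
    rwa [Fin.snoc_init_self, Fin.snoc_init_self] at this

lemma sum_snoc_nat {n : ℕ} (b : Fin n → ℕ) (k : ℕ) :
    (∑ i, (Fin.snoc b k : Fin (n+1) → ℕ) i) = (∑ i, b i) + k := by
  rw [Fin.sum_univ_castSucc]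
  simp [Fin.snoc_castSucc, Fin.snoc_last]

lemma prod_snoc_pow {n : ℕ} (z : Fin (n+1) → Circle) (b : Fin n → ℕ) (k : ℕ) :
    (∏ i, (z i : ℂ) ^ ((Fin.snoc b k : Fin (n+1) → ℕ) i))
      = (∏ i, (z i.castSucc : ℂ) ^ (b i)) * (z (Fin.last n) : ℂ) ^ k := by
  rw [Fin.prod_univ_castSucc]
  simp [Fin.snoc_castSucc, Fin.snoc_last]

/-- If every one-variable `X`-valued polynomial `f(z) = ∑_{k=0}^N x_k z^k` satisfies
`(∑_{k=0}^N ‖x_k‖^q ρ^{qk})^{1/q} ≤ (∫_𝕋 ‖f(z)‖^q dz)^{1/q}`, then every `X`-valued polynomial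
`P(z) = ∑_α x_α z^α` of `n` variables satisfies
`(∑_α ‖x_α‖^q ρ^{q|α|})^{1/q} ≤ (∫_{𝕋ⁿ} ‖P(z)‖^q dz)^{1/q}`. -/
theorem statement13 {X : Type*} [NormedAddCommGroup X] [NormedSpace ℂ X] [CompleteSpace X]
    (q ρ : ℝ) (hq : 2 ≤ q) (hρ : 0 < ρ)
    (h1 : ∀ (N : ℕ) (x : ℕ → X),
      (∑ k ∈ Finset.range (N + 1), ‖x k‖ ^ q * ρ ^ (q * (k : ℝ))) ^ (1 / q) ≤
        (∫ z : Circle, ‖∑ k ∈ Finset.range (N + 1), ((z : ℂ) ^ k) • x k‖ ^ q ∂ μC) ^ (1 / q)) :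
    ∀ (n : ℕ) (S : Finset (Fin n → ℕ)) (x : (Fin n → ℕ) → X),
      (∑ α ∈ S, ‖x α‖ ^ q * ρ ^ (q * ((∑ i, α i : ℕ) : ℝ))) ^ (1 / q) ≤
        (∫ z : Fin n → Circle,
          ‖∑ α ∈ S, (∏ i, (z i : ℂ) ^ (α i)) • x α‖ ^ q ∂ μT n) ^ (1 / q) := by
  have hq0 : (0:ℝ) < q := lt_of_lt_of_le two_pos hq
  have hq0' : q ≠ 0 := ne_of_gt hq0
  -- power-q form of the hypothesis
  have h1' : ∀ (N : ℕ) (x : ℕ → X),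
      (∑ k ∈ Finset.range (N + 1), ‖x k‖ ^ q * ρ ^ (q * (k : ℝ))) ≤
        ∫ z : Circle, ‖∑ k ∈ Finset.range (N + 1), ((z : ℂ) ^ k) • x k‖ ^ q ∂ μC := by
    intro N x
    have ha : (0:ℝ) ≤ ∑ k ∈ Finset.range (N + 1), ‖x k‖ ^ q * ρ ^ (q * (k : ℝ)) :=
      Finset.sum_nonneg fun k _ => by positivity
    have hb : (0:ℝ) ≤ ∫ z : Circle, ‖∑ k ∈ Finset.range (N + 1), ((z : ℂ) ^ k) • x k‖ ^ q ∂ μC :=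
      integral_nonneg fun z => Real.rpow_nonneg (norm_nonneg _) q
    have h := Real.rpow_le_rpow (Real.rpow_nonneg ha _) (h1 N x) hq0.le
    rwa [← Real.rpow_mul ha, ← Real.rpow_mul hb, one_div_mul_cancel hq0',
      Real.rpow_one, Real.rpow_one] at h
  suffices key : ∀ (n : ℕ) (S : Finset (Fin n → ℕ)) (x : (Fin n → ℕ) → X),
      (∑ α ∈ S, ‖x α‖ ^ q * ρ ^ (q * ((∑ i, α i : ℕ) : ℝ))) ≤
        ∫ z : Fin n → Circle, ‖∑ α ∈ S, (∏ i, (z i : ℂ) ^ (α i)) • x α‖ ^ q ∂ μT n by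
    intro n S x
    exact Real.rpow_le_rpow (Finset.sum_nonneg fun α _ => by positivity) (key n S x)
      (by positivity)
  intro n
  induction n with
  | zero =>
      intro S x
      simp only [Finset.univ_eq_empty, Finset.sum_empty, Finset.prod_empty, one_smul,
        Nat.cast_zero, mul_zero, Real.rpow_zero, mul_one]
      rw [integral_const]
      simp only [probReal_univ, one_smul]
      rcases S.eq_empty_or_nonempty with rfl | ⟨a, ha⟩
      · simp [Real.zero_rpow hq0']
      · have hS : S = {a} :=
          Finset.eq_singleton_iff_unique_mem.mpr ⟨ha, fun b _ => Subsingleton.elim b a⟩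
        subst hS
        simp
  | succ n IH =>
      intro S x
      set M := S.sup (fun α => α (Fin.last n)) with hM
      set B := S.image Fin.init with hB
      set x' : (Fin n → ℕ) × ℕ → X :=
        fun p => if Fin.snoc p.1 p.2 ∈ S then x (Fin.snoc p.1 p.2) else 0 with hx'
      set y : (Fin n → ℕ) → Circle → X :=
        fun b w => ∑ k ∈ Finset.range (M+1), ((w:ℂ)^k) • x' (b,k) with hy
      have hycont : ∀ b, Continuous (y b) := by
        intro b; rw [hy]; fun_prop
      set F : Circle × (Fin n → Circle) → ℝ :=
        fun p => ‖∑ b ∈ B, (∏ i, (p.2 i : ℂ) ^ (b i)) • y b p.1‖ ^ q with hF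
      have hFcont : Continuous F := by
        refine Continuous.rpow_const ?_ fun _ => Or.inr hq0.le
        apply Continuous.norm
        simp only [hy]
        fun_prop
      have hFint : Integrable F (μC.prod (μT n)) := cont_integrable _ hFcont
      -- Step A : rewrite LHS
      have stepA : (∑ α ∈ S, ‖x α‖ ^ q * ρ ^ (q * ((∑ i, α i : ℕ) : ℝ)))
          = ∑ b ∈ B, (∑ k ∈ Finset.range (M+1), ‖x' (b,k)‖ ^ q * ρ ^ (q * (k : ℝ)))
              * ρ ^ (q * ((∑ i, b i : ℕ) : ℝ)) := by
        rw [sum_snoc_reindex S (fun α => ‖x α‖ ^ q * ρ ^ (q * ((∑ i, α i : ℕ) : ℝ))),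
          Finset.sum_product, ← hM, ← hB]
        refine Finset.sum_congr rfl fun b _ => ?_
        rw [Finset.sum_mul]
        refine Finset.sum_congr rfl fun k _ => ?_
        by_cases h : Fin.snoc b k ∈ S
        · simp only [h, if_true, hx', if_true]
          rw [sum_snoc_nat]
          push_cast
          rw [mul_add, Real.rpow_add hρ]
          ring
        · simp [hx', h, Real.zero_rpow hq0']
      rw [stepA]
      -- Step B+C : apply one-variable inequality and pull the integral out
      have stepB : ∑ b ∈ B, (∑ k ∈ Finset.range (M+1), ‖x' (b,k)‖ ^ q * ρ ^ (q * (k : ℝ)))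
              * ρ ^ (q * ((∑ i, b i : ℕ) : ℝ))
          ≤ ∑ b ∈ B, (∫ w : Circle, ‖y b w‖ ^ q ∂ μC) * ρ ^ (q * ((∑ i, b i : ℕ) : ℝ)) := by
        refine Finset.sum_le_sum fun b _ => ?_
        exact mul_le_mul_of_nonneg_right (h1' M (fun k => x' (b,k))) (by positivity)
      refine le_trans stepB ?_
      have stepC : ∑ b ∈ B, (∫ w : Circle, ‖y b w‖ ^ q ∂ μC) * ρ ^ (q * ((∑ i, b i : ℕ) : ℝ))
          = ∫ w : Circle, ∑ b ∈ B, ‖y b w‖ ^ q * ρ ^ (q * ((∑ i, b i : ℕ) : ℝ)) ∂ μC := by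
        rw [integral_finset_sum]
        · refine Finset.sum_congr rfl fun b _ => ?_
          rw [← integral_mul_const]
        · intro b _
          apply cont_integrable
          apply Continuous.mul _ continuous_const
          exact ((hycont b).norm).rpow_const fun _ => Or.inr hq0.le
      rw [stepC]
      -- Step D : apply induction hypothesis pointwise, under the integral
      have stepD : ∫ w : Circle, ∑ b ∈ B, ‖y b w‖ ^ q * ρ ^ (q * ((∑ i, b i : ℕ) : ℝ)) ∂ μC
          ≤ ∫ w : Circle, (∫ z : Fin n → Circle,
              ‖∑ b ∈ B, (∏ i, (z i : ℂ) ^ (b i)) • y b w‖ ^ q ∂ μT n) ∂ μC := by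
        refine integral_mono_of_nonneg ?_ ?_ ?_
        · exact Filter.Eventually.of_forall fun w =>
            Finset.sum_nonneg fun b _ => by positivity
        · exact hFint.integral_prod_left
        · exact Filter.Eventually.of_forall fun w => IH B (fun b => y b w)
      refine le_trans stepD ?_
      -- Step E : Fubini
      have stepE : ∫ w : Circle, (∫ z : Fin n → Circle,
              ‖∑ b ∈ B, (∏ i, (z i : ℂ) ^ (b i)) • y b w‖ ^ q ∂ μT n) ∂ μC
          = ∫ p, F p ∂ (μC.prod (μT n)) := (integral_prod F hFint).symm
      rw [stepE]
      -- Step F : measure-preserving reindexing of the torus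
      have hMP := measurePreserving_piFinSuccAbove (fun _ : Fin (n+1) => μC) (Fin.last n)
      set E := MeasurableEquiv.piFinSuccAbove (fun _ : Fin (n+1) => Circle) (Fin.last n) with hE
      have stepF : ∫ p, F p ∂ (μC.prod (μT n))
          = ∫ α : Fin (n+1) → Circle, F (E α) ∂ μT (n+1) := by
        rw [μT, μT]
        exact (hMP.integral_comp E.measurableEmbedding F).symm
      rw [stepF]
      -- Step G : pointwise identification of the integrands
      have stepG : ∀ α : Fin (n+1) → Circle,
          F (E α) = ‖∑ α' ∈ S, (∏ i, (α i : ℂ) ^ (α' i)) • x α'‖ ^ q := by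
        intro α
        have hEα : F (E α) = ‖∑ b ∈ B,
            (∏ i, (α ((Fin.last n).succAbove i) : ℂ) ^ (b i)) • y b (α (Fin.last n))‖ ^ q := rfl
        rw [hEα]
        have hvec : (∑ b ∈ B,
              (∏ i, (α ((Fin.last n).succAbove i) : ℂ) ^ (b i)) • y b (α (Fin.last n)))
            = ∑ α' ∈ S, (∏ i, (α i : ℂ) ^ (α' i)) • x α' := by
          rw [sum_snoc_reindex S (fun α' => (∏ i, (α i : ℂ) ^ (α' i)) • x α'),
            Finset.sum_product, ← hM, ← hB]
          refine Finset.sum_congr rfl fun b _ => ?_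
          rw [hy]
          simp only
          rw [Finset.smul_sum]
          refine Finset.sum_congr rfl fun k _ => ?_
          rw [smul_smul]
          by_cases h : Fin.snoc b k ∈ S
          · simp only [h, if_true, hx', if_true]
            rw [prod_snoc_pow]
            congr 2
            refine Finset.prod_congr rfl fun i _ => ?_
            rw [Fin.succAbove_last]
          · simp [hx', h]
        rw [hvec]
      refine le_of_eq ?_
      exact integral_congr_ae (Filter.Eventually.of_forall fun α => stepG α)
end
end

section
/- Let V be a vector space, n, m, k ∈ ℕ with m ≥ 1, and let (v_A)_{A ⊆ [n], |A| = m} be a family in V. Then ∑_{B ⊆ [n], |B| = k} ∑_{A_1 ⊆ B, |A_1| = 1} ∑_{A_2 ⊆ B^c, |A_2| = m−1} v_{A_1 ∪ A_2} = m · binom(n−m, k−1) · ∑_{A ⊆ [n], |A| = m} v_A, where B^c = [n] \ B. -/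
set_option maxHeartbeats 1000000


open Finset

/-- The combinatorial identity
`∑_{B ⊆ [n], |B| = k} ∑_{A₁ ⊆ B, |A₁| = 1} ∑_{A₂ ⊆ Bᶜ, |A₂| = m−1} v_{A₁ ∪ A₂}
  = m · binom(n−m, k−1) · ∑_{A ⊆ [n], |A| = m} v_A`
for a family `v` in a vector space `V`, with `m, k ≥ 1`. -/
theorem statement15 {V : Type*} [AddCommGroup V] [Module ℝ V]
    (n m k : ℕ) (hm : 1 ≤ m) (hk : 1 ≤ k) (v : Finset (Fin n) → V) :
    ∑ B ∈ Finset.powersetCard k (Finset.univ : Finset (Fin n)),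
      ∑ A1 ∈ Finset.powersetCard 1 B,
        ∑ A2 ∈ Finset.powersetCard (m - 1) Bᶜ, v (A1 ∪ A2) =
      (m * Nat.choose (n - m) (k - 1)) •
        ∑ A ∈ Finset.powersetCard m (Finset.univ : Finset (Fin n)), v A := by
  classical
  have hm' : 1 + (m - 1) = m := Nat.add_sub_cancel' hm
  have hk' : 1 + (k - 1) = k := Nat.add_sub_cancel' hk
  set T : Finset (Finset (Fin n) × Finset (Fin n)) :=
    ((Finset.powersetCard 1 (univ : Finset (Fin n))) ×ˢ
      (Finset.powersetCard (m-1) (univ : Finset (Fin n)))).filter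
      (fun p => Disjoint p.1 p.2) with hT
  have step1 :
      ∑ B ∈ Finset.powersetCard k (Finset.univ : Finset (Fin n)),
        ∑ A1 ∈ Finset.powersetCard 1 B,
          ∑ A2 ∈ Finset.powersetCard (m - 1) Bᶜ, v (A1 ∪ A2)
      = ∑ p ∈ T, ∑ B ∈ (Finset.powersetCard k (univ : Finset (Fin n))).filter
          (fun B => p.1 ⊆ B ∧ p.2 ⊆ Bᶜ), v (p.1 ∪ p.2) := by
    have : ∀ B : Finset (Fin n),
        ∑ A1 ∈ Finset.powersetCard 1 B,
          ∑ A2 ∈ Finset.powersetCard (m - 1) Bᶜ, v (A1 ∪ A2)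
        = ∑ p ∈ Finset.powersetCard 1 B ×ˢ Finset.powersetCard (m-1) Bᶜ,
            v (p.1 ∪ p.2) := fun B => by rw [Finset.sum_product]
    rw [Finset.sum_congr rfl fun B _ => this B]
    refine Finset.sum_comm' fun B p => ?_
    simp only [Finset.mem_filter, Finset.mem_product, Finset.mem_powersetCard,
      Finset.subset_univ, true_and, hT]
    constructor
    · rintro ⟨hB, ⟨h1, h1c⟩, ⟨h2, h2c⟩⟩
      refine ⟨⟨hB, h1, h2⟩, ⟨h1c, h2c⟩,
        (disjoint_compl_right : Disjoint B Bᶜ).mono h1 h2⟩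
    · rintro ⟨⟨hB, h1, h2⟩, ⟨h1c, h2c⟩, _⟩
      exact ⟨hB, ⟨h1, h1c⟩, ⟨h2, h2c⟩⟩
  rw [step1]
  have card_eq : ∀ p ∈ T,
      ((Finset.powersetCard k (univ : Finset (Fin n))).filter
          (fun B => p.1 ⊆ B ∧ p.2 ⊆ Bᶜ)).card = Nat.choose (n - m) (k - 1) := by
    rintro ⟨A1, A2⟩ hp
    simp only [hT, Finset.mem_filter, Finset.mem_product, Finset.mem_powersetCard,
      Finset.subset_univ, true_and] at hp
    obtain ⟨⟨h1, h2⟩, hd⟩ := hp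
    have hAcard : (A1 ∪ A2).card = m := by
      rw [Finset.card_union_of_disjoint hd, h1, h2, hm']
    have hcompl : ((A1 ∪ A2)ᶜ : Finset (Fin n)).card = n - m := by
      rw [Finset.card_compl, hAcard, Fintype.card_fin]
    rw [Finset.card_nbij' (fun B => B \ A1) (fun C => A1 ∪ C)
      (t := Finset.powersetCard (k-1) ((A1 ∪ A2)ᶜ : Finset (Fin n)))
      ?_ ?_ ?_ ?_, Finset.card_powersetCard, hcompl]
    · rintro B hB
      simp only [Finset.mem_coe, Finset.mem_filter, Finset.mem_powersetCard, Finset.subset_univ,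
        true_and] at hB ⊢
      obtain ⟨hBk, hA1B, hA2B⟩ := hB
      constructor
      · intro x hx
        simp only [Finset.mem_sdiff] at hx
        simp only [Finset.mem_compl, Finset.mem_union]
        push_neg
        exact ⟨hx.2, fun h => by
          have := hA2B h
          simp only [Finset.mem_compl] at this
          exact this hx.1⟩
      · rw [Finset.card_sdiff_of_subset hA1B, hBk, h1]
    · rintro C hC
      simp only [Finset.mem_coe, Finset.mem_filter, Finset.mem_powersetCard, Finset.subset_univ,
        true_and] at hC ⊢
      obtain ⟨hCsub, hCk⟩ := hC
      have hCA1 : Disjoint A1 C := by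
        refine Finset.disjoint_left.2 fun x hx hxC => ?_
        have := hCsub hxC
        simp only [Finset.mem_compl, Finset.mem_union] at this
        exact this (Or.inl hx)
      have hCA2 : Disjoint A2 C := by
        refine Finset.disjoint_left.2 fun x hx hxC => ?_
        have := hCsub hxC
        simp only [Finset.mem_compl, Finset.mem_union] at this
        exact this (Or.inr hx)
      refine ⟨by rw [Finset.card_union_of_disjoint hCA1, h1, hCk, hk'],
        Finset.subset_union_left, ?_⟩
      intro x hx
      simp only [Finset.mem_compl, Finset.mem_union]
      push_neg
      exact ⟨fun h => Finset.disjoint_left.1 hd h hx,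
        fun h => Finset.disjoint_left.1 hCA2 hx h⟩
    · rintro B hB
      simp only [Finset.mem_coe, Finset.mem_filter, Finset.mem_powersetCard] at hB
      exact Finset.union_sdiff_of_subset hB.2.1
    · rintro C hC
      simp only [Finset.mem_coe, Finset.mem_filter, Finset.mem_powersetCard, Finset.subset_univ,
        true_and] at hC
      have hCA1 : Disjoint A1 C := by
        refine Finset.disjoint_left.2 fun x hx hxC => ?_
        have := hC.1 hxC
        simp only [Finset.mem_compl, Finset.mem_union] at this
        exact this (Or.inl hx)
      exact Finset.union_sdiff_cancel_left hCA1
  calc ∑ p ∈ T, ∑ B ∈ (Finset.powersetCard k (univ : Finset (Fin n))).filter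
          (fun B => p.1 ⊆ B ∧ p.2 ⊆ Bᶜ), v (p.1 ∪ p.2)
      = ∑ p ∈ T, Nat.choose (n - m) (k - 1) • v (p.1 ∪ p.2) := by
        refine Finset.sum_congr rfl fun p hp => ?_
        rw [Finset.sum_const, card_eq p hp]
    _ = Nat.choose (n - m) (k - 1) • ∑ p ∈ T, v (p.1 ∪ p.2) := by
        rw [Finset.smul_sum]
    _ = Nat.choose (n - m) (k - 1) •
          (m • ∑ A ∈ Finset.powersetCard m (Finset.univ : Finset (Fin n)), v A) := by
        congr 1
        have : ∑ p ∈ T, v (p.1 ∪ p.2)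
            = ∑ q ∈ (Finset.powersetCard m (Finset.univ : Finset (Fin n))).sigma
                (fun A => Finset.powersetCard 1 A), v q.1 := by
          refine Finset.sum_nbij' (fun p => ⟨p.1 ∪ p.2, p.1⟩)
            (fun q => (q.2, q.1 \ q.2)) ?_ ?_ ?_ ?_ ?_
          · rintro ⟨A1, A2⟩ hp
            simp only [hT, Finset.mem_filter, Finset.mem_product,
              Finset.mem_powersetCard, Finset.subset_univ, true_and] at hp
            obtain ⟨⟨h1, h2⟩, hd⟩ := hp
            simp only [Finset.mem_sigma, Finset.mem_powersetCard, Finset.subset_univ,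
              true_and]
            exact ⟨by rw [Finset.card_union_of_disjoint hd, h1, h2, hm'],
              Finset.subset_union_left, h1⟩
          · rintro ⟨A, A1⟩ hq
            simp only [Finset.mem_sigma, Finset.mem_powersetCard, Finset.subset_univ,
              true_and] at hq
            obtain ⟨hA, hA1A, hA1⟩ := hq
            simp only [hT, Finset.mem_filter, Finset.mem_product,
              Finset.mem_powersetCard, Finset.subset_univ, true_and]
            exact ⟨⟨hA1, by rw [Finset.card_sdiff_of_subset hA1A, hA, hA1]⟩,
              Finset.disjoint_sdiff⟩
          · rintro ⟨A1, A2⟩ hp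
            simp only [hT, Finset.mem_filter, Finset.mem_product,
              Finset.mem_powersetCard, Finset.subset_univ, true_and] at hp
            simp [Finset.union_sdiff_cancel_left hp.2]
          · rintro ⟨A, A1⟩ hq
            simp only [Finset.mem_sigma, Finset.mem_powersetCard, Finset.subset_univ,
              true_and] at hq
            simp [Finset.union_sdiff_of_subset hq.2.1]
          · rintro ⟨A1, A2⟩ _
            rfl
        rw [this, Finset.sum_sigma]
        rw [Finset.smul_sum]
        refine Finset.sum_congr rfl fun A hA => ?_
        simp only [Finset.mem_powersetCard, Finset.subset_univ, true_and] at hA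
        trans ∑ _s ∈ Finset.powersetCard 1 A, v A
        · rfl
        · rw [Finset.sum_const, Finset.card_powersetCard, hA, Nat.choose_one_right]
    _ = (m * Nat.choose (n - m) (k - 1)) •
          ∑ A ∈ Finset.powersetCard m (Finset.univ : Finset (Fin n)), v A := by
        rw [smul_smul, Nat.mul_comm]
end

section
/- For every complex Banach space X there is a constant B > 0 such that for every 1 ≤ q < ∞, every m, n ∈ ℕ, every 0 ≤ k ≤ m, and every family { x_A : A ⊆ [n], |A| ≤ m } in X, one has (E ‖∑_{A ⊆ [n], |A| = k} x_A ε_A‖^q)^{1/q} ≤ B^m (E ‖∑_{A ⊆ [n], |A| ≤ m} x_A ε_A‖^q)^{1/q}, where the expectation is over uniformly random ε ∈ {−1,1}^n. -/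
open MeasureTheory Finset
open scoped ENNReal NNReal

noncomputable section

/-- The Walsh character `ε_A = ∏_{i ∈ A} ε_i` of a sign vector `ε ∈ {-1,1}ⁿ`
(encoded by `ε : Fin n → Bool`, `true ↦ 1`, `false ↦ -1`). -/
def walshChar {n : ℕ} (ε : Fin n → Bool) (A : Finset (Fin n)) : ℂ :=
  ∏ i ∈ A, (if ε i then (1 : ℂ) else -1)

/-- The expectation of a function of a uniformly random sign vector `ε ∈ {-1,1}ⁿ`. -/
def walshExp (n : ℕ) (g : (Fin n → Bool) → ℝ) : ℝ :=
  (2 ^ n : ℝ)⁻¹ * ∑ ε : Fin n → Bool, g ε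

/-! ### Auxiliary lemmas -/

section Aux
open Polynomial Nat

lemma aux_pow_self_le (m : ℕ) : (m : ℝ) ^ m ≤ 3 ^ m * (m)! := by
  induction m with
  | zero => norm_num
  | succ m ih =>
    have hexp : ((m:ℝ) + 1) ^ m ≤ 3 * (m:ℝ) ^ m := by
      rcases Nat.eq_zero_or_pos m with h | h
      · subst h; norm_num
      · have hm : (0:ℝ) < m := by exact_mod_cast h
        have h1 : ((m:ℝ) + 1) ^ m = ((1 + 1/m) * m) ^ m := by field_simp
        have h2 : (1 + 1/(m:ℝ)) ^ m ≤ Real.exp 1 := by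
          have := Real.add_one_le_exp (1/(m:ℝ))
          calc (1 + 1/(m:ℝ)) ^ m ≤ (Real.exp (1/m)) ^ m := by
                apply pow_le_pow_left₀ (by positivity) (by linarith)
            _ = Real.exp ((1/m) * m) := by rw [← Real.exp_nat_mul]; ring_nf
            _ = Real.exp 1 := by field_simp
        have h3 : Real.exp 1 ≤ 3 := le_of_lt (lt_trans Real.exp_one_lt_d9 (by norm_num))
        calc ((m:ℝ)+1)^m = (1 + 1/(m:ℝ))^m * m^m := by rw [h1, mul_pow]
          _ ≤ 3 * m^m := mul_le_mul_of_nonneg_right (le_trans h2 h3) (by positivity)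
    push_cast [Nat.factorial_succ]
    calc ((m:ℝ)+1)^(m+1) = ((m:ℝ)+1) * ((m:ℝ)+1)^m := by ring
      _ ≤ ((m:ℝ)+1) * (3 * m^m) := mul_le_mul_of_nonneg_left hexp (by positivity)
      _ ≤ ((m:ℝ)+1) * (3 * (3^m * m !)) :=
          mul_le_mul_of_nonneg_left (mul_le_mul_of_nonneg_left ih (by norm_num)) (by positivity)
      _ = 3^(m+1) * (((m:ℝ)+1) * m !) := by ring

lemma aux_coeff_bound {ι : Type*} [DecidableEq ι] (s : Finset ι) (a : ι → ℝ)
    (ha : ∀ i ∈ s, |a i| ≤ 1) :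
    ∀ k, |(∏ i ∈ s, (X - C (a i))).coeff k| ≤ 2 ^ s.card := by
  induction s using Finset.induction with
  | empty =>
    intro k
    simp only [prod_empty, card_empty, pow_zero, coeff_one]
    split <;> simp
  | @insert i s hi ih =>
    intro k
    have ha' : ∀ j ∈ s, |a j| ≤ 1 := fun j hj => ha j (mem_insert_of_mem hj)
    have hai : |a i| ≤ 1 := ha i (mem_insert_self i s)
    rw [prod_insert hi, card_insert_of_notMem hi]
    have hexp : ((X - C (a i)) * ∏ j ∈ s, (X - C (a j))).coeff k
        = (X * ∏ j ∈ s, (X - C (a j))).coeff k - a i * (∏ j ∈ s, (X - C (a j))).coeff k := by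
      rw [sub_mul, coeff_sub, coeff_C_mul]
    rw [hexp]
    have hXk : |(X * ∏ j ∈ s, (X - C (a j))).coeff k| ≤ 2 ^ s.card := by
      cases k with
      | zero => simp [mul_coeff_zero]
      | succ k' => rw [coeff_X_mul]; exact ih ha' k'
    calc |(X * ∏ j ∈ s, (X - C (a j))).coeff k - a i * (∏ j ∈ s, (X - C (a j))).coeff k|
        ≤ |(X * ∏ j ∈ s, (X - C (a j))).coeff k| + |a i * (∏ j ∈ s, (X - C (a j))).coeff k| :=
          abs_sub _ _
      _ ≤ 2 ^ s.card + 1 * 2 ^ s.card := by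
          gcongr
          rw [abs_mul]
          exact mul_le_mul hai (ih ha' k) (abs_nonneg _) zero_le_one
      _ = 2 ^ (s.card + 1) := by ring

lemma aux_prod_range_sub (j : ℕ) : ∏ i ∈ range j, (j - i) = j ! := by
  rw [← Finset.prod_range_reflect, ← Finset.prod_range_add_one_eq_factorial]
  exact Finset.prod_congr rfl fun i hi => by rw [Finset.mem_range] at hi; omega

lemma aux_erase_range_split {m j : ℕ} (hj : j ≤ m) :
    (range (m+1)).erase j = Finset.disjUnion (range j) (Ico (j+1) (m+1))
      (by rw [Finset.disjoint_left]; intro i h1 h2; simp at h1 h2; omega) := by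
  ext i
  simp [Finset.mem_erase, Finset.mem_range, Finset.mem_Ico]
  omega

lemma aux_prod_abs_sub {m j : ℕ} (hj : j ≤ m) :
    ∏ i ∈ (range (m+1)).erase j, |(j:ℝ) - (i:ℝ)| = (j ! * (m - j)! : ℕ) := by
  rw [aux_erase_range_split hj, Finset.prod_disjUnion]
  push_cast
  congr 1
  · rw [← aux_prod_range_sub j]
    push_cast [Nat.cast_prod]
    apply Finset.prod_congr rfl
    intro i hi
    rw [Finset.mem_range] at hi
    have h1 : (i:ℝ) < j := by exact_mod_cast hi
    rw [abs_of_pos (by linarith), Nat.cast_sub hi.le]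
  · rw [Finset.prod_Ico_eq_prod_range, ← Finset.prod_range_add_one_eq_factorial]
    have h : m + 1 - (j+1) = m - j := by omega
    rw [h]
    push_cast
    apply Finset.prod_congr rfl
    intro i hi
    rw [abs_of_neg (by push_cast; linarith)]
    push_cast
    ring

/-- The key coefficient-extraction lemma: there are nodes `v j ∈ [-1,1]` and coefficients
`c j` with `∑ c j (v j)^l = δ_{l,k}` for `l ≤ m` and `∑ |c j| ≤ 12^m`. -/
lemma aux_extraction (m k : ℕ) (hm : 1 ≤ m) (hk : k ≤ m) :
    ∃ (v c : ℕ → ℝ), (∀ j ∈ Finset.range (m+1), |v j| ≤ 1) ∧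
      (∀ l ≤ m, ∑ j ∈ Finset.range (m+1), c j * v j ^ l = if l = k then 1 else 0) ∧
      ∑ j ∈ Finset.range (m+1), |c j| ≤ 12 ^ m := by
  have hm0 : (0:ℝ) < m := by exact_mod_cast hm
  set v : ℕ → ℝ := fun j => (2*(j:ℝ) - m)/m with hv
  set c : ℕ → ℝ := fun j => (Lagrange.basis (range (m+1)) v j).coeff k with hc
  have hinj : Set.InjOn v (range (m+1)) := by
    intro a ha b hb hab
    simp only [hv] at hab
    field_simp at hab
    exact_mod_cast (by linarith : (a:ℝ) = b)
  have hvb : ∀ j ∈ Finset.range (m+1), |v j| ≤ 1 := by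
    intro j hj
    rw [Finset.mem_range] at hj
    have hj' : (j:ℝ) ≤ m := by exact_mod_cast Nat.lt_succ_iff.mp hj
    rw [abs_le]
    constructor
    · rw [le_div_iff₀ hm0]; push_cast; linarith [Nat.cast_nonneg (α := ℝ) j]
    · rw [div_le_iff₀ hm0]; linarith
  refine ⟨v, c, hvb, ?_, ?_⟩
  · intro l hl
    have hdeg : (X ^ l : ℝ[X]).degree < (range (m+1)).card := by
      rw [degree_X_pow, Finset.card_range]
      exact_mod_cast Nat.lt_succ_of_le hl
    have hint := Lagrange.eq_interpolate hinj hdeg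
    have hco := congrArg (fun p => Polynomial.coeff p k) hint
    simp only [Lagrange.interpolate_apply, Polynomial.finset_sum_coeff, coeff_C_mul,
      eval_pow, eval_X, coeff_X_pow] at hco
    rw [show (if l = k then (1:ℝ) else 0) = if k = l then 1 else 0 by simp [eq_comm]]
    rw [hco]
    exact Finset.sum_congr rfl fun j _ => mul_comm _ _
  · have hcb : ∀ j ∈ Finset.range (m+1), |c j| ≤ 6 ^ m := by
      intro j hj
      rw [Finset.mem_range, Nat.lt_succ_iff] at hj
      have hjmem : j ∈ range (m+1) := by simp [Nat.lt_succ_of_le hj]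
      have hcard : ((range (m+1)).erase j).card = m := by
        rw [Finset.card_erase_of_mem hjmem]; simp
      have hbasis : Lagrange.basis (range (m+1)) v j
          = C (∏ i ∈ (range (m+1)).erase j, (v j - v i)⁻¹)
            * ∏ i ∈ (range (m+1)).erase j, (X - C (v i)) := by
        rw [Lagrange.basis]
        simp_rw [Lagrange.basisDivisor]
        rw [Finset.prod_mul_distrib, map_prod]
      have hterm : ∀ i : ℕ, |v j - v i| = (2/(m:ℝ)) * |(j:ℝ) - (i:ℝ)| := by
        intro i
        have h1 : v j - v i = 2*((j:ℝ)-(i:ℝ))/m := by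
          simp only [hv]; field_simp; ring
        rw [h1, abs_div, abs_mul, abs_two, abs_of_pos hm0]
        ring
      have hprod : ∏ i ∈ (range (m+1)).erase j, |v j - v i|
          = (2/(m:ℝ))^m * ((j)! * (m - j)! : ℕ) := by
        simp_rw [hterm]
        rw [Finset.prod_mul_distrib, Finset.prod_const, hcard, aux_prod_abs_sub hj]
      have hchoose : (m.choose j : ℝ) ≤ 2^m := by
        have h2 : m.choose j ≤ 2^m := by
          calc m.choose j ≤ ∑ i ∈ range (m+1), m.choose i :=
                Finset.single_le_sum (fun i _ => Nat.zero_le _) hjmem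
            _ = 2^m := Nat.sum_range_choose m
        exact_mod_cast h2
      have hfacpos : (0:ℝ) < ((j)! * (m - j)! : ℕ) := by positivity
      have hfac : ((m)! : ℝ) / 2^m ≤ ((j)! * (m - j)! : ℕ) := by
        have h1 : (m.choose j : ℝ) * ((j)! * (m - j)! : ℕ) = (m)! := by
          push_cast
          rw [← Nat.choose_mul_factorial_mul_factorial hj]
          push_cast; ring
        rw [div_le_iff₀ (by positivity)]
        calc ((m)! : ℝ) = (m.choose j : ℝ) * ((j)! * (m - j)! : ℕ) := h1.symm
          _ ≤ 2^m * ((j)! * (m - j)! : ℕ) := mul_le_mul_of_nonneg_right hchoose hfacpos.le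
          _ = ((j)! * (m - j)! : ℕ) * 2^m := by ring
      have hlow : (3:ℝ)⁻¹^m ≤ ∏ i ∈ (range (m+1)).erase j, |v j - v i| := by
        rw [hprod]
        have h3 := aux_pow_self_le m
        calc (3:ℝ)⁻¹^m = (m:ℝ)^m / (3^m * (m:ℝ)^m) := by field_simp; rw [← mul_pow]; norm_num
          _ ≤ (3^m * ((m)! : ℝ)) / (3^m * (m:ℝ)^m) := by gcongr
          _ = ((m)! : ℝ) / (m:ℝ)^m := by
              rw [mul_div_mul_left _ _ (by positivity : (3:ℝ)^m ≠ 0)]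
          _ ≤ (2/(m:ℝ))^m * ((j)! * (m - j)! : ℕ) := by
              have hfac' : ((m)! : ℝ) ≤ 2^m * ((j)! * (m-j)! : ℕ) := by
                rw [div_le_iff₀ (by positivity : (0:ℝ) < 2^m)] at hfac; linarith [hfac]
              calc ((m)! : ℝ) / (m:ℝ)^m ≤ (2^m * ((j)! * (m-j)! : ℕ)) / (m:ℝ)^m := by gcongr
                _ = (2/(m:ℝ))^m * ((j)! * (m-j)! : ℕ) := by rw [div_pow]; ring
      have hcoeff : |(∏ i ∈ (range (m+1)).erase j, (X - C (v i))).coeff k| ≤ 2^m := by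
        have := aux_coeff_bound ((range (m+1)).erase j) v
          (fun i hi => hvb i (Finset.mem_of_mem_erase hi)) k
        rwa [hcard] at this
      have hcform : |c j| = (∏ i ∈ (range (m+1)).erase j, |v j - v i|)⁻¹
          * |(∏ i ∈ (range (m+1)).erase j, (X - C (v i))).coeff k| := by
        simp only [hc, hbasis, coeff_C_mul, abs_mul]
        congr 1
        rw [abs_prod, ← Finset.prod_inv_distrib]
        exact Finset.prod_congr rfl fun i _ => abs_inv _
      rw [hcform]
      calc (∏ i ∈ (range (m+1)).erase j, |v j - v i|)⁻¹
            * |(∏ i ∈ (range (m+1)).erase j, (X - C (v i))).coeff k|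
          ≤ ((3:ℝ)⁻¹^m)⁻¹ * 2^m := by
            apply mul_le_mul _ hcoeff (abs_nonneg _) (by positivity)
            exact inv_anti₀ (by positivity) hlow
        _ = 6^m := by rw [← inv_pow, inv_inv, ← mul_pow]; norm_num
    calc ∑ j ∈ Finset.range (m+1), |c j| ≤ ∑ j ∈ Finset.range (m+1), (6:ℝ)^m :=
          Finset.sum_le_sum hcb
      _ = (m+1) * 6^m := by rw [Finset.sum_const, Finset.card_range]; push_cast; ring
      _ ≤ 2^m * 6^m := by
          have : (m:ℝ)+1 ≤ 2^m := by exact_mod_cast Nat.succ_le_of_lt (Nat.lt_two_pow_self (n := m))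
          exact mul_le_mul_of_nonneg_right this (by positivity)
      _ = 12^m := by rw [← mul_pow]; norm_num

end Aux

/-! ### Probabilistic lemmas -/

def sgnR (b : Bool) : ℝ := if b then 1 else -1

def wtR (r : ℝ) (b : Bool) : ℝ := if b then (1+r)/2 else (1-r)/2

def WR {n : ℕ} (r : ℝ) (δ : Fin n → Bool) : ℝ := ∏ i, wtR r (δ i)

lemma wtR_nonneg {r : ℝ} (hr : |r| ≤ 1) (b : Bool) : 0 ≤ wtR r b := by
  rw [abs_le] at hr; cases b <;> simp [wtR] <;> linarith

lemma WR_nonneg {n : ℕ} {r : ℝ} (hr : |r| ≤ 1) (δ : Fin n → Bool) : 0 ≤ WR r δ :=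
  Finset.prod_nonneg fun i _ => wtR_nonneg hr _

lemma sum_bool_prod {n : ℕ} (g : Fin n → Bool → ℝ) :
    ∑ δ : Fin n → Bool, ∏ i, g i (δ i) = ∏ i, (g i true + g i false) := by
  rw [← Fintype.prod_sum]
  exact Finset.prod_congr rfl fun i _ => by rw [Fintype.sum_bool]

lemma sum_WR {n : ℕ} (r : ℝ) : ∑ δ : Fin n → Bool, WR r δ = 1 := by
  unfold WR
  rw [sum_bool_prod]
  simp only [wtR]
  norm_num
  rw [show (1 + r) / 2 + (1 - r) / 2 = (1:ℝ) by ring, one_pow]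

lemma prod_sgn_eq {n : ℕ} (A : Finset (Fin n)) (δ : Fin n → Bool) :
    ∏ i ∈ A, sgnR (δ i) = ∏ i : Fin n, (if i ∈ A then sgnR (δ i) else 1) := by
  rw [Finset.prod_ite_mem univ A fun i => sgnR (δ i), univ_inter]

lemma momentR {n : ℕ} (r : ℝ) (A : Finset (Fin n)) :
    ∑ δ : Fin n → Bool, WR r δ * ∏ i ∈ A, sgnR (δ i) = r ^ A.card := by
  have h1 : ∀ δ : Fin n → Bool, WR r δ * ∏ i ∈ A, sgnR (δ i)
      = ∏ i, (wtR r (δ i) * (if i ∈ A then sgnR (δ i) else 1)) := by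
    intro δ
    rw [Finset.prod_mul_distrib, WR, prod_sgn_eq]
  simp_rw [h1]
  rw [sum_bool_prod (fun i b => wtR r b * (if i ∈ A then sgnR b else 1))]
  have h2 : ∀ i : Fin n, (wtR r true * (if i ∈ A then sgnR true else 1)
      + wtR r false * (if i ∈ A then sgnR false else 1)) = if i ∈ A then r else 1 := by
    intro i
    by_cases h : i ∈ A <;> simp [h, wtR, sgnR] <;> ring
  simp_rw [h2]
  rw [Finset.prod_ite_mem univ A fun _ => r, univ_inter, Finset.prod_const]

lemma flip_invol {n : ℕ} (δ : Fin n → Bool) :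
    Function.Involutive (fun (ε : Fin n → Bool) i => (δ i == ε i)) := by
  intro ε
  funext i
  simp only []
  cases δ i <;> cases ε i <;> rfl

lemma sgn_xnor (a b : Bool) : sgnR (a == b) = sgnR a * sgnR b := by
  cases a <;> cases b <;> simp [sgnR]

lemma walshExp_flip {n : ℕ} (δ : Fin n → Bool) (g : (Fin n → Bool) → ℝ) :
    walshExp n (fun ε => g (fun i => δ i == ε i)) = walshExp n g := by
  unfold walshExp
  congr 1
  exact Fintype.sum_bijective _ (flip_invol δ).bijective _ _ (fun ε => rfl)

lemma walshExp_mono {n : ℕ} {f g : (Fin n → Bool) → ℝ} (h : ∀ ε, f ε ≤ g ε) :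
    walshExp n f ≤ walshExp n g := by
  unfold walshExp
  apply mul_le_mul_of_nonneg_left (Finset.sum_le_sum fun ε _ => h ε) (by positivity)

lemma walshExp_nonneg {n : ℕ} {f : (Fin n → Bool) → ℝ} (h : ∀ ε, 0 ≤ f ε) :
    0 ≤ walshExp n f := by
  unfold walshExp
  exact mul_nonneg (by positivity) (Finset.sum_nonneg fun ε _ => h ε)

lemma walshExp_sum {n : ℕ} {ι : Type*} (s : Finset ι) (h : ι → (Fin n → Bool) → ℝ) :
    walshExp n (fun ε => ∑ t ∈ s, h t ε) = ∑ t ∈ s, walshExp n (h t) := by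
  unfold walshExp
  rw [Finset.sum_comm, Finset.mul_sum]

lemma walshExp_const_mul {n : ℕ} (a : ℝ) (f : (Fin n → Bool) → ℝ) :
    walshExp n (fun ε => a * f ε) = a * walshExp n f := by
  unfold walshExp
  rw [← Finset.mul_sum]
  ring

/-- For every Banach space `X` there is `B > 0` such that for every `1 ≤ q < ∞`, every Walsh
polynomial of degree at most `m` and every `0 ≤ k ≤ m`, the `k`-homogeneous projection satisfies
`(E‖∑_{|A|=k} x_A ε_A‖^q)^{1/q} ≤ Bᵐ (E‖∑_{|A|≤m} x_A ε_A‖^q)^{1/q}`. -/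
theorem statement18 (X : Type*) [NormedAddCommGroup X] [NormedSpace ℂ X] [CompleteSpace X] :
    ∃ B : ℝ, 0 < B ∧
      ∀ (q : ℝ), 1 ≤ q →
        ∀ (m n k : ℕ), k ≤ m →
          ∀ x : Finset (Fin n) → X,
            (walshExp n fun ε =>
                ‖∑ A ∈ Finset.univ.filter (fun A : Finset (Fin n) => A.card = k),
                  walshChar ε A • x A‖ ^ q) ^ (1 / q) ≤
              B ^ m * (walshExp n fun ε =>
                ‖∑ A ∈ Finset.univ.filter (fun A : Finset (Fin n) => A.card ≤ m),
                  walshChar ε A • x A‖ ^ q) ^ (1 / q) := by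
  refine ⟨12, by norm_num, ?_⟩
  intro q hq m n k hk x
  have hq0 : (0:ℝ) < q := lt_of_lt_of_le one_pos hq
  have hsm : ∀ (ε : Fin n → Bool) (A : Finset (Fin n)),
      walshChar ε A • x A = (∏ i ∈ A, sgnR (ε i)) • x A := by
    intro ε A
    have h : walshChar ε A = ((∏ i ∈ A, sgnR (ε i) : ℝ) : ℂ) := by
      unfold walshChar
      push_cast
      exact Finset.prod_congr rfl fun i _ => by cases ε i <;> simp [sgnR]
    rw [h, ← Complex.coe_algebraMap, algebraMap_smul]
  -- replace complex smul by real smul everywhere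
  have hLe : (walshExp n fun ε =>
      ‖∑ A ∈ Finset.univ.filter (fun A : Finset (Fin n) => A.card = k),
        walshChar ε A • x A‖ ^ q)
    = walshExp n fun ε =>
      ‖∑ A ∈ Finset.univ.filter (fun A : Finset (Fin n) => A.card = k),
        (∏ i ∈ A, sgnR (ε i)) • x A‖ ^ q := by
    congr 1
    funext ε
    congr 2
    exact Finset.sum_congr rfl fun A _ => hsm ε A
  have hRe : (walshExp n fun ε =>
      ‖∑ A ∈ Finset.univ.filter (fun A : Finset (Fin n) => A.card ≤ m),
        walshChar ε A • x A‖ ^ q)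
    = walshExp n fun ε =>
      ‖∑ A ∈ Finset.univ.filter (fun A : Finset (Fin n) => A.card ≤ m),
        (∏ i ∈ A, sgnR (ε i)) • x A‖ ^ q := by
    congr 1
    funext ε
    congr 2
    exact Finset.sum_congr rfl fun A _ => hsm ε A
  rw [hLe, hRe]
  rcases Nat.eq_zero_or_pos m with hm | hm
  · subst hm
    have hk0 : k = 0 := Nat.le_zero.mp hk
    subst hk0
    have hfe : (Finset.univ.filter (fun A : Finset (Fin n) => A.card = 0))
        = (Finset.univ.filter (fun A : Finset (Fin n) => A.card ≤ 0)) := by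
      apply Finset.filter_congr
      intro A _
      simp [Nat.le_zero]
    simp only [hfe, pow_zero, one_mul]
    exact le_refl _
  · obtain ⟨v, c, hvb, hid, hcb⟩ := aux_extraction m k hm hk
    set PR : (Fin n → Bool) → X := fun ε =>
      ∑ A ∈ Finset.univ.filter (fun A : Finset (Fin n) => A.card ≤ m),
        (∏ i ∈ A, sgnR (ε i)) • x A with hPR
    set PK : (Fin n → Bool) → X := fun ε =>
      ∑ A ∈ Finset.univ.filter (fun A : Finset (Fin n) => A.card = k),
        (∏ i ∈ A, sgnR (ε i)) • x A with hPK
    set F : Finset (Finset (Fin n)) :=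
      Finset.univ.filter (fun A : Finset (Fin n) => A.card ≤ m) with hF
    -- key pointwise identity
    have key : ∀ ε : Fin n → Bool,
        PK ε = ∑ j ∈ Finset.range (m+1), ∑ δ : Fin n → Bool,
          (c j * WR (v j) δ) • PR (fun i => δ i == ε i) := by
      intro ε
      have step1 : ∀ j ∈ Finset.range (m+1),
          (∑ δ : Fin n → Bool, (c j * WR (v j) δ) • PR (fun i => δ i == ε i))
          = ∑ A ∈ F, (c j * (v j) ^ A.card * ∏ i ∈ A, sgnR (ε i)) • x A := by
        intro j hj
        calc ∑ δ : Fin n → Bool, (c j * WR (v j) δ) • PR (fun i => δ i == ε i)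
            = ∑ δ : Fin n → Bool, ∑ A ∈ F,
                ((c j * WR (v j) δ) * ((∏ i ∈ A, sgnR (δ i)) * (∏ i ∈ A, sgnR (ε i)))) • x A := by
              apply Finset.sum_congr rfl
              intro δ _
              rw [hPR, Finset.smul_sum]
              apply Finset.sum_congr rfl
              intro A _
              rw [smul_smul]
              congr 2
              simp_rw [sgn_xnor]
              rw [Finset.prod_mul_distrib]
          _ = ∑ A ∈ F, ∑ δ : Fin n → Bool,
                ((c j * WR (v j) δ) * ((∏ i ∈ A, sgnR (δ i)) * (∏ i ∈ A, sgnR (ε i)))) • x A :=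
              Finset.sum_comm
          _ = ∑ A ∈ F, (c j * (v j) ^ A.card * ∏ i ∈ A, sgnR (ε i)) • x A := by
              apply Finset.sum_congr rfl
              intro A _
              rw [← Finset.sum_smul]
              congr 1
              have h1 : ∑ δ : Fin n → Bool,
                  (c j * WR (v j) δ) * ((∏ i ∈ A, sgnR (δ i)) * (∏ i ∈ A, sgnR (ε i)))
                  = (c j * ∏ i ∈ A, sgnR (ε i))
                      * ∑ δ : Fin n → Bool, WR (v j) δ * ∏ i ∈ A, sgnR (δ i) := by
                rw [Finset.mul_sum]
                apply Finset.sum_congr rfl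
                intro δ _
                ring
              rw [h1, momentR]
              ring
      calc PK ε
          = ∑ A ∈ F, ((if A.card = k then (1:ℝ) else 0) * ∏ i ∈ A, sgnR (ε i)) • x A := by
            rw [hPK]
            have h2 : ∀ A ∈ F, ((if A.card = k then (1:ℝ) else 0) * ∏ i ∈ A, sgnR (ε i)) • x A
                = if A.card = k then (∏ i ∈ A, sgnR (ε i)) • x A else 0 := by
              intro A _
              by_cases h : A.card = k <;> simp [h]
            rw [Finset.sum_congr rfl h2, ← Finset.sum_filter, hF, Finset.filter_filter]
            apply Finset.sum_congr _ (fun A _ => rfl)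
            apply Finset.filter_congr
            intro A _
            exact ⟨fun h => ⟨h ▸ hk, h⟩, fun h => h.2⟩
        _ = ∑ A ∈ F, ((∑ j ∈ Finset.range (m+1), c j * v j ^ A.card)
              * ∏ i ∈ A, sgnR (ε i)) • x A := by
            apply Finset.sum_congr rfl
            intro A hA
            rw [hF, Finset.mem_filter] at hA
            rw [hid A.card hA.2]
        _ = ∑ A ∈ F, ∑ j ∈ Finset.range (m+1),
              (c j * (v j) ^ A.card * ∏ i ∈ A, sgnR (ε i)) • x A := by
            apply Finset.sum_congr rfl
            intro A _
            rw [← Finset.sum_smul, Finset.sum_mul]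
        _ = ∑ j ∈ Finset.range (m+1), ∑ A ∈ F,
              (c j * (v j) ^ A.card * ∏ i ∈ A, sgnR (ε i)) • x A := Finset.sum_comm
        _ = ∑ j ∈ Finset.range (m+1), ∑ δ : Fin n → Bool,
              (c j * WR (v j) δ) • PR (fun i => δ i == ε i) :=
            (Finset.sum_congr rfl step1).symm
    -- the total mass
    set S : ℝ := ∑ j ∈ Finset.range (m+1), |c j| with hS
    have hS1 : 1 ≤ S := by
      have h := hid k hk
      simp only [if_pos rfl] at h
      calc (1:ℝ) = |∑ j ∈ Finset.range (m+1), c j * v j ^ k| := by rw [h]; norm_num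
        _ ≤ ∑ j ∈ Finset.range (m+1), |c j * v j ^ k| := Finset.abs_sum_le_sum_abs _ _
        _ ≤ S := by
            apply Finset.sum_le_sum
            intro j hj
            rw [abs_mul, abs_pow]
            calc |c j| * |v j| ^ k ≤ |c j| * 1 :=
                  mul_le_mul_of_nonneg_left (pow_le_one₀ (abs_nonneg _) (hvb j hj)) (abs_nonneg _)
              _ = |c j| := mul_one _
    have hS0 : (0:ℝ) < S := lt_of_lt_of_le one_pos hS1
    -- pointwise norm bound
    have hnorm : ∀ ε : Fin n → Bool, ‖PK ε‖ ≤ ∑ j ∈ Finset.range (m+1),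
        ∑ δ : Fin n → Bool, (|c j| * WR (v j) δ) * ‖PR (fun i => δ i == ε i)‖ := by
      intro ε
      rw [key ε]
      refine le_trans (norm_sum_le _ _) (Finset.sum_le_sum fun j hj => ?_)
      refine le_trans (norm_sum_le _ _) (Finset.sum_le_sum fun δ _ => ?_)
      rw [norm_smul, Real.norm_eq_abs, abs_mul, abs_of_nonneg (WR_nonneg (hvb j hj) δ)]
    -- Jensen setup over the product index set
    set T : Finset (ℕ × (Fin n → Bool)) :=
      (Finset.range (m+1)) ×ˢ (Finset.univ : Finset (Fin n → Bool)) with hT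
    set w : ℕ × (Fin n → Bool) → ℝ := fun t => (|c t.1| * WR (v t.1) t.2) / S with hw
    have hwnn : ∀ t ∈ T, 0 ≤ w t := by
      intro t ht
      rw [hT, Finset.mem_product] at ht
      exact div_nonneg (mul_nonneg (abs_nonneg _) (WR_nonneg (hvb t.1 ht.1) t.2)) hS0.le
    have hwsum : ∑ t ∈ T, w t = 1 := by
      rw [hw, ← Finset.sum_div, hT, Finset.sum_product]
      have h3 : ∀ j ∈ Finset.range (m+1),
          ∑ δ : Fin n → Bool, |c j| * WR (v j) δ = |c j| := by
        intro j _
        rw [← Finset.mul_sum, sum_WR, mul_one]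
      rw [Finset.sum_congr rfl h3, ← hS, div_self hS0.ne']
    -- pointwise q-power bound
    have hpt : ∀ ε : Fin n → Bool, ‖PK ε‖ ^ q
        ≤ S ^ q * ∑ t ∈ T, w t * ‖PR (fun i => t.2 i == ε i)‖ ^ q := by
      intro ε
      have h1 : ‖PK ε‖ ≤ S * ∑ t ∈ T, w t * ‖PR (fun i => t.2 i == ε i)‖ := by
        rw [Finset.mul_sum]
        calc ‖PK ε‖ ≤ ∑ j ∈ Finset.range (m+1),
              ∑ δ : Fin n → Bool, (|c j| * WR (v j) δ) * ‖PR (fun i => δ i == ε i)‖ := hnorm ε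
          _ = ∑ t ∈ T, (|c t.1| * WR (v t.1) t.2) * ‖PR (fun i => t.2 i == ε i)‖ := by
              rw [hT, Finset.sum_product]
          _ = ∑ t ∈ T, S * (w t * ‖PR (fun i => t.2 i == ε i)‖) := by
              apply Finset.sum_congr rfl
              intro t _
              rw [hw]
              field_simp
      have h2 := Real.rpow_arith_mean_le_arith_mean_rpow T w
        (fun t => ‖PR (fun i => t.2 i == ε i)‖) hwnn hwsum
        (fun t _ => norm_nonneg _) hq
      have hsumnn : 0 ≤ ∑ t ∈ T, w t * ‖PR (fun i => t.2 i == ε i)‖ :=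
        Finset.sum_nonneg fun t ht => mul_nonneg (hwnn t ht) (norm_nonneg _)
      calc ‖PK ε‖ ^ q ≤ (S * ∑ t ∈ T, w t * ‖PR (fun i => t.2 i == ε i)‖) ^ q :=
            Real.rpow_le_rpow (norm_nonneg _) h1 hq0.le
        _ = S ^ q * (∑ t ∈ T, w t * ‖PR (fun i => t.2 i == ε i)‖) ^ q :=
            Real.mul_rpow hS0.le hsumnn
        _ ≤ S ^ q * ∑ t ∈ T, w t * ‖PR (fun i => t.2 i == ε i)‖ ^ q :=
            mul_le_mul_of_nonneg_left h2 (Real.rpow_nonneg hS0.le q)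
    -- pass to expectations
    have hE : walshExp n (fun ε => ‖PK ε‖ ^ q)
        ≤ S ^ q * walshExp n (fun ε => ‖PR ε‖ ^ q) := by
      calc walshExp n (fun ε => ‖PK ε‖ ^ q)
          ≤ walshExp n (fun ε => S ^ q * ∑ t ∈ T, w t * ‖PR (fun i => t.2 i == ε i)‖ ^ q) :=
            walshExp_mono hpt
        _ = S ^ q * ∑ t ∈ T, w t * walshExp n (fun ε => ‖PR (fun i => t.2 i == ε i)‖ ^ q) := by
            rw [walshExp_const_mul, walshExp_sum T
              (fun t ε => w t * ‖PR (fun i => t.2 i == ε i)‖ ^ q)]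
            congr 1
            exact Finset.sum_congr rfl fun t _ =>
              walshExp_const_mul (w t) (fun ε => ‖PR (fun i => t.2 i == ε i)‖ ^ q)
        _ = S ^ q * ∑ t ∈ T, w t * walshExp n (fun ε => ‖PR ε‖ ^ q) := by
            congr 1
            apply Finset.sum_congr rfl
            intro t _
            rw [walshExp_flip t.2 (fun ε => ‖PR ε‖ ^ q)]
        _ = S ^ q * walshExp n (fun ε => ‖PR ε‖ ^ q) := by
            rw [← Finset.sum_mul, hwsum, one_mul]
    -- conclude
    have hE0 : 0 ≤ walshExp n (fun ε => ‖PR ε‖ ^ q) :=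
      walshExp_nonneg fun ε => Real.rpow_nonneg (norm_nonneg _) q
    have hEK : 0 ≤ walshExp n (fun ε => ‖PK ε‖ ^ q) :=
      walshExp_nonneg fun ε => Real.rpow_nonneg (norm_nonneg _) q
    calc (walshExp n fun ε => ‖PK ε‖ ^ q) ^ (1/q)
        ≤ (S ^ q * walshExp n (fun ε => ‖PR ε‖ ^ q)) ^ (1/q) :=
          Real.rpow_le_rpow hEK hE (by positivity)
      _ = S * (walshExp n fun ε => ‖PR ε‖ ^ q) ^ (1/q) := by
          rw [Real.mul_rpow (Real.rpow_nonneg hS0.le q) hE0, ← Real.rpow_mul hS0.le,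
            mul_one_div_cancel hq0.ne', Real.rpow_one]
      _ ≤ 12 ^ m * (walshExp n fun ε => ‖PR ε‖ ^ q) ^ (1/q) :=
          mul_le_mul_of_nonneg_right hcb (Real.rpow_nonneg hE0 _)

end
end

section
/- There is a constant B > 1 such that for every m ∈ ℕ there exist real polynomials p_1, …, p_{m+1}, each of degree at most m, satisfying ∫_0^1 t^{i−1} p_j(t) dt = δ_{ij} for all 1 ≤ i, j ≤ m+1, and sup_{0 ≤ t ≤ 1} |p_j(t)| ≤ B^m for every 1 ≤ j ≤ m+1. -/
open Polynomial Finset intervalIntegral MeasureTheory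

-- (m+1)^m ≤ 3 * m^m
lemma succ_pow_le (m : ℕ) : ((m:ℝ) + 1) ^ m ≤ 3 * (m:ℝ) ^ m := by
  rcases Nat.eq_zero_or_pos m with h | h
  · subst h; norm_num
  · have hm : (0:ℝ) < m := by exact_mod_cast h
    have h1 : ((m:ℝ) + 1) = m * (1 + 1/m) := by field_simp
    have h2 : (1 + 1/(m:ℝ)) ≤ Real.exp (1/m) := by
      have := Real.add_one_le_exp (1/(m:ℝ)); linarith
    have h3 : (1 + 1/(m:ℝ))^m ≤ Real.exp (1/m) ^ m := by
      apply pow_le_pow_left₀ (by positivity) h2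
    have h4 : Real.exp (1/(m:ℝ)) ^ m = Real.exp 1 := by
      rw [← Real.exp_nat_mul]; congr 1; field_simp
    have h5 : Real.exp 1 ≤ 3 := by
      have := Real.exp_one_lt_d9; linarith
    calc ((m:ℝ)+1)^m = (m:ℝ)^m * (1+1/m)^m := by rw [h1, mul_pow]
    _ ≤ (m:ℝ)^m * 3 := by
        apply mul_le_mul_of_nonneg_left _ (by positivity)
        calc (1+1/(m:ℝ))^m ≤ Real.exp (1/m) ^ m := h3
        _ = Real.exp 1 := h4
        _ ≤ 3 := h5
    _ = 3 * (m:ℝ)^m := by ring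

lemma pow_le_three_pow_mul_factorial (m : ℕ) : (m:ℝ) ^ m ≤ 3 ^ m * (m.factorial : ℝ) := by
  induction m with
  | zero => norm_num
  | succ n ih =>
    have h1 : ((n:ℝ) + 1) ^ (n+1) = ((n:ℝ)+1) * ((n:ℝ)+1)^n := by ring
    push_cast
    rw [h1]
    calc ((n:ℝ)+1) * ((n:ℝ)+1)^n ≤ ((n:ℝ)+1) * (3 * (n:ℝ)^n) := by
          apply mul_le_mul_of_nonneg_left (succ_pow_le n) (by positivity)
      _ ≤ ((n:ℝ)+1) * (3 * (3^n * n.factorial)) := by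
          apply mul_le_mul_of_nonneg_left _ (by positivity)
          apply mul_le_mul_of_nonneg_left ih (by norm_num)
      _ = 3^(n+1) * ((n:ℝ)+1) * n.factorial := by ring
      _ = 3 ^ (n + 1) * ((n+1).factorial : ℝ) := by
          rw [Nat.factorial_succ]; push_cast; ring

-- coefficient bound for products of linear factors
lemma coeff_prod_linear_le {ι : Type*} [DecidableEq ι] (t : Finset ι) (d b : ι → ℝ)
    (hb : ∀ j ∈ t, |b j| ≤ 1) (k : ℕ) :
    |(∏ j ∈ t, (C (d j) * (X - C (b j)))).coeff k| ≤ (∏ j ∈ t, |d j|) * 2 ^ t.card := by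
  induction t using Finset.induction_on generalizing k with
  | empty =>
    simp only [prod_empty, card_empty, pow_zero, mul_one, coeff_one]
    split_ifs <;> norm_num
  | insert a s ha ih =>
    have hb' : ∀ j ∈ s, |b j| ≤ 1 := fun j hj => hb j (mem_insert_of_mem hj)
    have hba : |b a| ≤ 1 := hb a (mem_insert_self a s)
    rw [prod_insert ha, prod_insert ha, card_insert_of_notMem ha]
    set P := ∏ j ∈ s, (C (d j) * (X - C (b j))) with hP
    have expand : C (d a) * (X - C (b a)) * P = C (d a) * (X * P) - C (d a) * (C (b a) * P) := by
      ring
    rw [expand]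
    rw [coeff_sub, coeff_C_mul, coeff_C_mul, coeff_C_mul]
    have hXP : (X * P).coeff k = if k = 0 then 0 else P.coeff (k-1) := by
      rcases Nat.eq_zero_or_pos k with h | h
      · simp [h, coeff_X_mul_zero]
      · rw [if_neg h.ne', ← Nat.succ_pred_eq_of_pos h, Polynomial.coeff_X_mul]
        simp
    have key : |d a * (X*P).coeff k - d a * (b a * P.coeff k)|
        ≤ |d a| * ((∏ j ∈ s, |d j|) * 2 ^ s.card) + |d a| * ((∏ j ∈ s, |d j|) * 2 ^ s.card) := by
      have h1 : |d a * (X*P).coeff k| ≤ |d a| * ((∏ j ∈ s, |d j|) * 2 ^ s.card) := by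
        rw [abs_mul]
        apply mul_le_mul_of_nonneg_left _ (abs_nonneg _)
        rw [hXP]; split_ifs
        · simp; positivity
        · exact ih hb' _
      have h2 : |d a * (b a * P.coeff k)| ≤ |d a| * ((∏ j ∈ s, |d j|) * 2 ^ s.card) := by
        rw [abs_mul, abs_mul]
        apply mul_le_mul_of_nonneg_left _ (abs_nonneg _)
        calc |b a| * |P.coeff k| ≤ 1 * |P.coeff k| :=
              mul_le_mul_of_nonneg_right hba (abs_nonneg _)
          _ = |P.coeff k| := one_mul _
          _ ≤ (∏ j ∈ s, |d j|) * 2 ^ s.card := ih hb' _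
      calc |d a * (X*P).coeff k - d a * (b a * P.coeff k)|
          ≤ |d a * (X*P).coeff k| + |d a * (b a * P.coeff k)| := abs_sub _ _
        _ ≤ _ := add_le_add h1 h2
    calc |d a * (X*P).coeff k - d a * (b a * P.coeff k)|
        ≤ |d a| * ((∏ j ∈ s, |d j|) * 2 ^ s.card) + |d a| * ((∏ j ∈ s, |d j|) * 2 ^ s.card) := key
      _ = (|d a| * ∏ j ∈ s, |d j|) * 2 ^ (s.card + 1) := by ring

lemma prod_dist (m i : ℕ) (him : i ≤ m) :
    ∏ j ∈ (range (m+1)).erase i, |(i:ℝ) - (j:ℝ)|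
      = (i.factorial : ℝ) * ((m-i).factorial : ℝ) := by
  have hsplit : (range (m+1)).erase i = range i ∪ Ico (i+1) (m+1) := by
    ext j
    simp only [mem_erase, mem_range, mem_union, mem_Ico]
    omega
  have hdisj : Disjoint (range i) (Ico (i+1) (m+1)) := by
    rw [Finset.disjoint_left]
    intro j hj hj'
    simp only [mem_range] at hj
    simp only [mem_Ico] at hj'
    omega
  rw [hsplit, prod_union hdisj]
  have h1 : ∏ j ∈ range i, |(i:ℝ) - (j:ℝ)| = (i.factorial : ℝ) := by
    have : ∀ j ∈ range i, |(i:ℝ) - (j:ℝ)| = ((i - j : ℕ) : ℝ) := by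
      intro j hj
      rw [mem_range] at hj
      rw [Nat.cast_sub hj.le, abs_of_nonneg]
      have : (j:ℝ) < i := by exact_mod_cast hj
      linarith
    rw [prod_congr rfl this, ← Nat.cast_prod]
    congr 1
    rw [← Finset.prod_range_reflect (fun j => i - j) i]
    have : ∀ j ∈ range i, i - (i - 1 - j) = j + 1 := by intro j hj; rw [mem_range] at hj; omega
    rw [prod_congr rfl this, Finset.prod_range_add_one_eq_factorial]
  have h2 : ∏ j ∈ Ico (i+1) (m+1), |(i:ℝ) - (j:ℝ)| = ((m-i).factorial : ℝ) := by
    have : ∀ j ∈ Ico (i+1) (m+1), |(i:ℝ) - (j:ℝ)| = ((j - i : ℕ) : ℝ) := by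
      intro j hj
      rw [mem_Ico] at hj
      rw [abs_sub_comm, Nat.cast_sub (by omega), abs_of_nonneg]
      have : (i:ℝ) < j := by exact_mod_cast (by omega : i < j)
      linarith
    rw [prod_congr rfl this, ← Nat.cast_prod]
    congr 1
    rw [Finset.prod_Ico_eq_prod_range]
    have e1 : m + 1 - (i+1) = m - i := by omega
    rw [e1]
    have : ∀ j ∈ range (m-i), i + 1 + j - i = j + 1 := by intro j _; omega
    rw [prod_congr rfl this, Finset.prod_range_add_one_eq_factorial]
  rw [h1, h2]

-- lower bound:  6⁻ᵐ * m^m  ≤ i! (m-i)!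
lemma fact_mul_fact_ge (m i : ℕ) (him : i ≤ m) :
    (m:ℝ)^m / 6^m ≤ (i.factorial : ℝ) * ((m-i).factorial : ℝ) := by
  have he : m.choose i * i.factorial * (m-i).factorial = m.factorial :=
    Nat.choose_mul_factorial_mul_factorial him
  have hc : m.choose i ≤ 2^m := by
    calc m.choose i ≤ ∑ k ∈ range (m+1), m.choose k :=
          Finset.single_le_sum (fun k _ => Nat.zero_le _) (by rw [mem_range]; omega)
      _ = 2^m := Nat.sum_range_choose m
  have h1 : (m.factorial : ℝ) ≤ 2^m * ((i.factorial : ℝ) * ((m-i).factorial : ℝ)) := by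
    have := he
    have hcast : (m.factorial : ℝ) = (m.choose i : ℝ) * i.factorial * (m-i).factorial := by
      exact_mod_cast congrArg (Nat.cast : ℕ → ℝ) he.symm
    rw [hcast]
    have hcr : (m.choose i : ℝ) ≤ 2^m := by exact_mod_cast hc
    have hnn : (0:ℝ) ≤ (i.factorial : ℝ) * ((m-i).factorial : ℝ) := by positivity
    calc (m.choose i : ℝ) * i.factorial * (m-i).factorial
        = (m.choose i : ℝ) * ((i.factorial : ℝ) * ((m-i).factorial : ℝ)) := by ring
      _ ≤ 2^m * ((i.factorial : ℝ) * ((m-i).factorial : ℝ)) :=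
          mul_le_mul_of_nonneg_right hcr hnn
  have h2 : (m:ℝ)^m ≤ 6^m * ((i.factorial : ℝ) * ((m-i).factorial : ℝ)) := by
    calc (m:ℝ)^m ≤ 3^m * (m.factorial : ℝ) := pow_le_three_pow_mul_factorial m
      _ ≤ 3^m * (2^m * ((i.factorial : ℝ) * ((m-i).factorial : ℝ))) :=
          mul_le_mul_of_nonneg_left h1 (by positivity)
      _ = 6^m * ((i.factorial : ℝ) * ((m-i).factorial : ℝ)) := by
          rw [← mul_assoc, ← mul_pow]; norm_num
  rw [div_le_iff₀ (by positivity)]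
  calc (m:ℝ)^m ≤ 6^m * ((i.factorial : ℝ) * ((m-i).factorial : ℝ)) := h2
    _ = (i.factorial : ℝ) * ((m-i).factorial : ℝ) * 6^m := by ring

noncomputable def Hmat (m : ℕ) : Matrix (Fin (m+1)) (Fin (m+1)) ℝ :=
  fun i k => (((i:ℕ) : ℝ) + ((k:ℕ) : ℝ) + 1)⁻¹

lemma Hmat_def (m : ℕ) (i k : Fin (m+1)) : Hmat m i k = (((i:ℕ) : ℝ) + ((k:ℕ) : ℝ) + 1)⁻¹ := rfl

noncomputable def pol (m : ℕ) (w : Fin (m+1) → ℝ) : Polynomial ℝ :=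
  ∑ k : Fin (m+1), C (w k) * X^(k:ℕ)

lemma pol_eval (m : ℕ) (w : Fin (m+1) → ℝ) (t : ℝ) :
    (pol m w).eval t = ∑ k : Fin (m+1), w k * t^(k:ℕ) := by
  rw [pol, Polynomial.eval_finset_sum]
  exact Finset.sum_congr rfl fun k _ => by simp

lemma pol_coeff (m : ℕ) (w : Fin (m+1) → ℝ) (a : Fin (m+1)) :
    (pol m w).coeff (a:ℕ) = w a := by
  rw [pol, Polynomial.finset_sum_coeff]
  have : ∀ k : Fin (m+1), (C (w k) * X^(k:ℕ)).coeff (a:ℕ) = if k = a then w k else 0 := by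
    intro k
    rw [Polynomial.coeff_C_mul, Polynomial.coeff_X_pow]
    by_cases h : k = a
    · simp [h]
    · rw [if_neg (fun hc : (a:ℕ) = (k:ℕ) => h (Fin.ext hc.symm)), if_neg h, mul_zero]
  rw [Finset.sum_congr rfl fun k _ => this k, Finset.sum_ite_eq' univ a w, if_pos (mem_univ a)]

lemma pol_natDegree_le (m : ℕ) (w : Fin (m+1) → ℝ) : (pol m w).natDegree ≤ m := by
  apply Polynomial.natDegree_sum_le_of_forall_le
  intro k _
  calc (C (w k) * X^(k:ℕ)).natDegree ≤ (X^(k:ℕ) : Polynomial ℝ).natDegree := by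
        apply Polynomial.natDegree_C_mul_le
    _ ≤ (k:ℕ) := by rw [Polynomial.natDegree_X_pow]
    _ ≤ m := by omega

lemma integral_pow_mul_eval (m : ℕ) (i : ℕ) (w : Fin (m+1) → ℝ) :
    ∫ t in (0:ℝ)..1, t^i * (pol m w).eval t
      = ∑ k : Fin (m+1), w k * (((i:ℝ) + ((k:ℕ):ℝ) + 1))⁻¹ := by
  have h1 : ∀ t : ℝ, t^i * (pol m w).eval t = ∑ k : Fin (m+1), w k * t^(i + (k:ℕ)) := by
    intro t
    rw [pol_eval, Finset.mul_sum]
    exact Finset.sum_congr rfl fun k _ => by rw [pow_add]; ring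
  simp_rw [h1]
  rw [intervalIntegral.integral_finset_sum]
  · apply Finset.sum_congr rfl
    intro k _
    rw [intervalIntegral.integral_const_mul, integral_pow]
    rw [one_pow, zero_pow (Nat.succ_ne_zero _), sub_zero, ← one_div]
    congr 1
    rw [one_div]
    congr 1
    push_cast
    ring
  · intro k _
    exact (continuous_const.mul (continuous_pow _)).intervalIntegrable _ _

lemma Hmat_det_ne_zero (m : ℕ) : (Hmat m).det ≠ 0 := by
  intro hdet
  obtain ⟨v, hv0, hv⟩ := (Matrix.exists_mulVec_eq_zero_iff).mpr hdet
  set P := pol m v with hP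
  have hint : ∀ i : Fin (m+1), ∫ t in (0:ℝ)..1, t^(i:ℕ) * P.eval t = 0 := by
    intro i
    rw [hP, integral_pow_mul_eval]
    have : ∀ k : Fin (m+1), v k * (((i:ℕ):ℝ) + ((k:ℕ):ℝ) + 1)⁻¹ = Hmat m i k * v k := by
      intro k; rw [Hmat]; ring
    rw [Finset.sum_congr rfl fun k _ => this k]
    have := congrFun hv i
    rw [Matrix.mulVec, dotProduct] at this
    exact this
  have hsq : ∫ t in (0:ℝ)..1, (P.eval t)^2 = 0 := by
    have h2 : ∀ t : ℝ, (P.eval t)^2 = ∑ i : Fin (m+1), v i * (t^(i:ℕ) * P.eval t) := by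
      intro t
      have : (P.eval t)^2 = P.eval t * P.eval t := sq (P.eval t) ▸ rfl
      rw [this]
      nth_rewrite 1 [hP, pol_eval]
      rw [Finset.sum_mul]
      exact Finset.sum_congr rfl fun i _ => by ring
    simp_rw [h2]
    rw [intervalIntegral.integral_finset_sum]
    · apply Finset.sum_eq_zero
      intro i _
      rw [intervalIntegral.integral_const_mul, hint i, mul_zero]
    · intro i _
      exact (continuous_const.mul ((continuous_pow _).mul P.continuous)).intervalIntegrable _ _
  -- conclude P = 0 a.e., hence P = 0, hence v = 0
  have hae : (fun t => (P.eval t)^2) =ᵐ[volume.restrict (Set.Ioc (0:ℝ) 1)] 0 := by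
    rw [← intervalIntegral.integral_eq_zero_iff_of_le_of_nonneg_ae (by norm_num)
      (Filter.Eventually.of_forall (fun t => sq_nonneg _))
      ((P.continuous.pow 2).intervalIntegrable _ _)]
    exact hsq
  have hPne : P ≠ 0 := by
    intro h0
    apply hv0
    funext a
    have := pol_coeff m v a
    rw [← hP, h0] at this
    simpa using this.symm
  have hroots : {t : ℝ | P.eval t = 0}.Finite := Polynomial.finite_setOf_isRoot hPne
  have hsub : Set.Ioc (0:ℝ) 1 ⊆ {t : ℝ | P.eval t = 0} ∪ {t ∈ Set.Ioc (0:ℝ) 1 | (P.eval t)^2 ≠ 0} := by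
    intro t ht
    by_cases h : P.eval t = 0
    · exact Or.inl h
    · exact Or.inr ⟨ht, pow_ne_zero _ h⟩
  have hnull : volume {t ∈ Set.Ioc (0:ℝ) 1 | (P.eval t)^2 ≠ 0} = 0 := by
    have := hae
    rw [Filter.EventuallyEq, ae_restrict_iff' measurableSet_Ioc] at this
    rw [ae_iff] at this
    convert this using 2
    ext t
    simp [Set.mem_setOf_eq]
    tauto
  have : volume (Set.Ioc (0:ℝ) 1) = 0 := by
    apply measure_mono_null hsub
    apply measure_union_null (hroots.measure_zero _) hnull
  simp at this

lemma coeff_bound (m : ℕ) (hm : 1 ≤ m) (q : Polynomial ℝ) (hq : q.natDegree ≤ m)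
    (N : ℝ) (hN : ∀ t ∈ Set.Icc (0:ℝ) 1, |q.eval t| ≤ N) (k : ℕ) :
    |q.coeff k| ≤ 24^m * N := by
  have hmR : (0:ℝ) < m := by exact_mod_cast hm
  have hN0 : 0 ≤ N := le_trans (abs_nonneg _) (hN 0 (by norm_num))
  set v : ℕ → ℝ := fun j => j / m with hv
  have hinj : Set.InjOn v (range (m+1) : Finset ℕ) := by
    intro a _ b _ hab
    have : (a:ℝ) = b := by
      simp only [hv] at hab; rw [div_left_inj' hmR.ne'] at hab; exact_mod_cast hab
    exact_mod_cast this
  -- basis coefficient bound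
  have hbasis : ∀ i ∈ range (m+1), ∀ k : ℕ,
      |(Lagrange.basis (range (m+1)) v i).coeff k| ≤ 12 ^ m := by
    intro i hi k
    rw [mem_range] at hi
    have him : i ≤ m := by omega
    have hcard : ((range (m+1)).erase i).card = m := by
      rw [card_erase_of_mem (by rw [mem_range]; omega), card_range]
      omega
    have hrw : Lagrange.basis (range (m+1)) v i
        = ∏ j ∈ (range (m+1)).erase i, (C ((v i - v j)⁻¹) * (X - C (v j))) := by
      rfl
    rw [hrw]
    have hb1 : ∀ j ∈ (range (m+1)).erase i, |v j| ≤ 1 := by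
      intro j hj
      rw [mem_erase, mem_range] at hj
      rw [hv, abs_of_nonneg (by positivity), div_le_one hmR]
      exact_mod_cast (by omega : j ≤ m)
    have key := coeff_prod_linear_le ((range (m+1)).erase i)
      (fun j => (v i - v j)⁻¹) v hb1 k
    refine key.trans ?_
    rw [hcard]
    have hprod : ∏ j ∈ (range (m+1)).erase i, |(v i - v j)⁻¹| ≤ 6 ^ m := by
      have heq : ∏ j ∈ (range (m+1)).erase i, |v i - v j|
          = ((i.factorial : ℝ) * ((m-i).factorial : ℝ)) / (m:ℝ)^m := by
        have hterm : ∀ j ∈ (range (m+1)).erase i, |v i - v j| = |(i:ℝ) - (j:ℝ)| / m := by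
          intro j _
          rw [hv]
          rw [div_sub_div_same, abs_div, abs_of_pos hmR]
        rw [prod_congr rfl hterm, prod_div_distrib, prod_const, hcard, prod_dist m i him]
      have hpos : (0:ℝ) < ∏ j ∈ (range (m+1)).erase i, |v i - v j| := by
        rw [heq]
        have := Nat.factorial_pos i
        have := Nat.factorial_pos (m-i)
        positivity
      have hlow : (6:ℝ)⁻¹ ^ m ≤ ∏ j ∈ (range (m+1)).erase i, |v i - v j| := by
        rw [heq]
        rw [le_div_iff₀ (by positivity)]
        have := fact_mul_fact_ge m i him
        calc (6:ℝ)⁻¹ ^ m * (m:ℝ)^m = (m:ℝ)^m / 6^m := by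
              rw [inv_pow]; ring
          _ ≤ _ := fact_mul_fact_ge m i him
      rw [← abs_prod] at hlow ⊢
      rw [Finset.prod_inv_distrib, abs_inv]
      have h6 : (0:ℝ) < 6⁻¹ ^ m := by positivity
      rw [inv_le_comm₀ (lt_of_lt_of_le h6 hlow) (by positivity)]
      rw [← inv_pow]
      exact hlow
    calc (∏ j ∈ (range (m+1)).erase i, |(v i - v j)⁻¹|) * 2 ^ m
        ≤ 6^m * 2^m := mul_le_mul_of_nonneg_right hprod (by positivity)
      _ = 12^m := by rw [← mul_pow]; norm_num
  -- interpolation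
  have hdeg : q.degree < (#(range (m+1)) : WithBot ℕ) := by
    rw [card_range]
    calc q.degree ≤ (q.natDegree : WithBot ℕ) := Polynomial.degree_le_natDegree
      _ ≤ (m : WithBot ℕ) := by exact_mod_cast hq
      _ < ((m+1 : ℕ) : WithBot ℕ) := by exact_mod_cast (Nat.lt_succ_self m)
  have hqi := Lagrange.eq_interpolate hinj hdeg
  have hcoeff : q.coeff k = ∑ i ∈ range (m+1), q.eval (v i) * (Lagrange.basis (range (m+1)) v i).coeff k := by
    conv_lhs => rw [hqi]
    rw [Lagrange.interpolate_apply, Polynomial.finset_sum_coeff]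
    exact Finset.sum_congr rfl (fun i _ => by rw [Polynomial.coeff_C_mul])
  rw [hcoeff]
  have hvmem : ∀ i ∈ range (m+1), v i ∈ Set.Icc (0:ℝ) 1 := by
    intro i hi
    rw [mem_range] at hi
    constructor
    · positivity
    · rw [hv, div_le_one hmR]; exact_mod_cast (by omega : i ≤ m)
  calc |∑ i ∈ range (m+1), q.eval (v i) * (Lagrange.basis (range (m+1)) v i).coeff k|
      ≤ ∑ i ∈ range (m+1), |q.eval (v i) * (Lagrange.basis (range (m+1)) v i).coeff k| :=
        Finset.abs_sum_le_sum_abs _ _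
    _ ≤ ∑ i ∈ range (m+1), N * 12^m := by
        apply Finset.sum_le_sum
        intro i hi
        rw [abs_mul]
        exact mul_le_mul (hN _ (hvmem i hi)) (hbasis i hi k) (abs_nonneg _) hN0
    _ = (m+1) * (N * 12^m) := by rw [Finset.sum_const, card_range]; push_cast; ring
    _ ≤ 2^m * (N * 12^m) := by
        apply mul_le_mul_of_nonneg_right _ (by positivity)
        exact_mod_cast (Nat.lt_two_pow_self (n := m))
    _ = 24^m * N := by rw [show (24:ℝ)^m = 2^m * 12^m by rw [← mul_pow]; norm_num]; ring

-- Lipschitz lemma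
lemma eval_lipschitz (m : ℕ) (q : Polynomial ℝ) (hq : q.natDegree ≤ m) (A : ℝ)
    (hA : ∀ k, |q.coeff k| ≤ A) (x y : ℝ) (hx : x ∈ Set.Icc (0:ℝ) 1)
    (hy : y ∈ Set.Icc (0:ℝ) 1) :
    |q.eval x - q.eval y| ≤ A * (m * (m+1)) * |x - y| := by
  obtain ⟨hx0, hx1⟩ := hx
  obtain ⟨hy0, hy1⟩ := hy
  have hev : ∀ z : ℝ, q.eval z = ∑ k ∈ range (m+1), q.coeff k * z^k := by
    intro z
    exact Polynomial.eval_eq_sum_range' (by omega) z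
  have hpowdiff : ∀ k : ℕ, |x^k - y^k| ≤ k * |x - y| := by
    intro k
    have := geom_sum₂_mul x y k
    rw [← this, abs_mul]
    apply mul_le_mul_of_nonneg_right _ (abs_nonneg _)
    calc |∑ i ∈ range k, x^i * y^(k-1-i)| ≤ ∑ i ∈ range k, |x^i * y^(k-1-i)| :=
          Finset.abs_sum_le_sum_abs _ _
      _ ≤ ∑ i ∈ range k, 1 := by
          apply Finset.sum_le_sum
          intro i _
          rw [abs_mul, abs_pow, abs_pow, abs_of_nonneg hx0, abs_of_nonneg hy0]
          exact mul_le_one₀ (pow_le_one₀ hx0 hx1) (by positivity) (pow_le_one₀ hy0 hy1)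
      _ = k := by simp
  have hA0 : 0 ≤ A := le_trans (abs_nonneg _) (hA 0)
  rw [hev x, hev y, ← Finset.sum_sub_distrib]
  calc |∑ k ∈ range (m+1), (q.coeff k * x^k - q.coeff k * y^k)|
      ≤ ∑ k ∈ range (m+1), |q.coeff k * x^k - q.coeff k * y^k| := Finset.abs_sum_le_sum_abs _ _
    _ ≤ ∑ k ∈ range (m+1), A * m * |x - y| := by
        apply Finset.sum_le_sum
        intro k hk
        rw [mem_range] at hk
        rw [← mul_sub, abs_mul]
        calc |q.coeff k| * |x^k - y^k| ≤ A * (k * |x - y|) :=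
              mul_le_mul (hA k) (hpowdiff k) (abs_nonneg _) hA0
          _ ≤ A * (m * |x - y|) := by
              apply mul_le_mul_of_nonneg_left _ hA0
              apply mul_le_mul_of_nonneg_right _ (abs_nonneg _)
              exact_mod_cast (by omega : k ≤ m)
          _ = A * m * |x - y| := by ring
    _ = (m+1) * (A * m * |x - y|) := by
        rw [Finset.sum_const, card_range, nsmul_eq_mul]
        push_cast
        ring
    _ = A * (m * (m+1)) * |x - y| := by ring

/-- There is a constant `B > 1` such that for every `m` there are real polynomials
`p_1, …, p_{m+1}` of degree at most `m`, biorthogonal to the monomials `1, t, …, t^m` on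
`[0,1]` (`∫_0^1 t^{i-1} p_j(t) dt = δ_{ij}`), with `sup_{0 ≤ t ≤ 1} |p_j(t)| ≤ B^m`. -/
theorem statement19 :
    ∃ B : ℝ, 1 < B ∧
      ∀ m : ℕ, ∃ p : Fin (m + 1) → Polynomial ℝ,
        (∀ j, (p j).natDegree ≤ m) ∧
        (∀ i j : Fin (m + 1),
          (∫ t in (0 : ℝ)..1, t ^ (i : ℕ) * (p j).eval t) = if i = j then 1 else 0) ∧
        (∀ j, ∀ t ∈ Set.Icc (0 : ℝ) 1, |(p j).eval t| ≤ B ^ m) := by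
  refine ⟨18432, by norm_num, fun m => ?_⟩
  rcases Nat.eq_zero_or_pos m with hm0 | hmpos
  · -- m = 0 : constant polynomial 1
    subst hm0
    refine ⟨fun _ => Polynomial.C 1, ?_, ?_, ?_⟩
    · intro j; simp
    · intro i j
      have hij : i = j := Fin.ext (by have hi := i.is_lt; have hj := j.is_lt; omega)
      simp [hij]
    · intro j t _
      simp
  · -- main case m ≥ 1
    have hm : 1 ≤ m := hmpos
    set Hinv := (Hmat m)⁻¹ with hHinv
    set p : Fin (m+1) → Polynomial ℝ := fun j => pol m (fun k => Hinv k j) with hp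
    have hunit : IsUnit (Hmat m).det := isUnit_iff_ne_zero.mpr (Hmat_det_ne_zero m)
    have hbio : ∀ i j : Fin (m+1),
        (∫ t in (0 : ℝ)..1, t ^ (i : ℕ) * (p j).eval t) = if i = j then 1 else 0 := by
      intro i j
      rw [hp, integral_pow_mul_eval]
      have : ∀ k : Fin (m+1), Hinv k j * ((((i:ℕ)):ℝ) + ((k:ℕ):ℝ) + 1)⁻¹
          = Hmat m i k * Hinv k j := by
        intro k; rw [Hmat_def]; ring
      rw [Finset.sum_congr rfl fun k _ => this k]
      have hmul : Hmat m * Hinv = 1 := Matrix.mul_nonsing_inv _ hunit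
      have := congrFun (congrFun hmul i) j
      rw [Matrix.mul_apply] at this
      rw [this, Matrix.one_apply]
    have hdeg : ∀ j, (p j).natDegree ≤ m := fun j => pol_natDegree_le m _
    refine ⟨p, hdeg, hbio, ?_⟩
    intro j
    -- sup bound for p j
    obtain ⟨x, hxI, hxmax⟩ := (isCompact_Icc : IsCompact (Set.Icc (0:ℝ) 1)).exists_isMaxOn
      (Set.nonempty_Icc.mpr (by norm_num))
      (continuous_abs.comp (p j).continuous).continuousOn
    set N := |(p j).eval x| with hN
    have hNmax : ∀ t ∈ Set.Icc (0:ℝ) 1, |(p j).eval t| ≤ N := fun t ht => hxmax ht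
    have hN0 : 0 ≤ N := abs_nonneg _
    suffices hNB : N ≤ 18432 ^ m by
      intro t ht; exact le_trans (hNmax t ht) hNB
    -- coefficient bound
    have hcoef : ∀ k : ℕ, |(p j).coeff k| ≤ 24^m * N :=
      coeff_bound m hm (p j) (hdeg j) N hNmax
    -- S² = Hinv j j
    have hSsq : ∫ t in (0:ℝ)..1, ((p j).eval t)^2 = Hinv j j := by
      have h2 : ∀ t : ℝ, ((p j).eval t)^2
          = ∑ i : Fin (m+1), Hinv i j * (t^(i:ℕ) * (p j).eval t) := by
        intro t
        have : ((p j).eval t)^2 = (p j).eval t * (p j).eval t := sq ((p j).eval t) ▸ rfl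
        rw [this]
        nth_rewrite 1 [hp, pol_eval]
        rw [Finset.sum_mul]
        exact Finset.sum_congr rfl fun i _ => by ring
      simp_rw [h2]
      rw [intervalIntegral.integral_finset_sum]
      · have : ∀ i : Fin (m+1), (∫ t in (0:ℝ)..1, Hinv i j * (t^(i:ℕ) * (p j).eval t))
            = Hinv i j * (if i = j then 1 else 0) := by
          intro i
          rw [intervalIntegral.integral_const_mul, hbio i j]
        rw [Finset.sum_congr rfl fun i _ => this i]
        simp [Finset.sum_ite_eq']
      · intro i _
        exact (continuous_const.mul ((continuous_pow _).mul (p j).continuous)).intervalIntegrable _ _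
    -- the Lipschitz constant setup
    set K : ℝ := m * (m+1) * 24^m with hK
    have hK1 : (1:ℝ) ≤ K := by
      rw [hK]
      have h1 : (1:ℝ) ≤ m := by exact_mod_cast hm
      have h2 : (1:ℝ) ≤ (m:ℝ)+1 := by linarith
      have h3 : (1:ℝ) ≤ 24^m := one_le_pow₀ (by norm_num)
      have hstep : (1:ℝ)*1*1 ≤ (m:ℝ)*((m:ℝ)+1)*24^m := by
        apply mul_le_mul _ h3 (by norm_num) (by positivity)
        apply mul_le_mul h1 h2 (by norm_num) (by linarith)
      linarith
    set δ : ℝ := 1 / (2*K) with hδ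
    have hδpos : 0 < δ := by rw [hδ]; positivity
    have hδhalf : δ ≤ 1/2 := by
      rw [hδ, div_le_div_iff₀ (by linarith) (by norm_num)]
      linarith
    -- interval [a,b] of length δ inside [0,1] containing x
    obtain ⟨a, b, hab, haI, hbI, hxab⟩ :
        ∃ a b : ℝ, b - a = δ ∧ 0 ≤ a ∧ b ≤ 1 ∧ ∀ t ∈ Set.Icc a b, |t - x| ≤ δ := by
      rcases le_or_gt x (1/2) with h | h
      · refine ⟨x, x + δ, by ring, hxI.1, by linarith, ?_⟩
        intro t ⟨ht1, ht2⟩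
        rw [abs_le]; constructor <;> linarith
      · refine ⟨x - δ, x, by ring, by linarith, hxI.2, ?_⟩
        intro t ⟨ht1, ht2⟩
        rw [abs_le]; constructor <;> linarith
    have habI : ∀ t ∈ Set.Icc a b, t ∈ Set.Icc (0:ℝ) 1 := by
      intro t ⟨ht1, ht2⟩
      exact ⟨by linarith, by linarith⟩
    -- |p(t)| ≥ N/2 on [a,b]
    have hlower : ∀ t ∈ Set.Icc a b, N/2 ≤ |(p j).eval t| := by
      intro t ht
      have hlip := eval_lipschitz m (p j) (hdeg j) (24^m * N) hcoef x t hxI (habI t ht)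
      have hd : |x - t| ≤ δ := by rw [abs_sub_comm]; exact hxab t ht
      have h1 : |(p j).eval x - (p j).eval t| ≤ 24^m * N * (m * (m+1)) * δ := by
        refine le_trans hlip ?_
        apply mul_le_mul_of_nonneg_left hd (by positivity)
      have h2 : 24^m * N * (m * (m+1)) * δ = N / 2 := by
        rw [hδ, hK]
        field_simp
      have h3 : N - |(p j).eval t| ≤ |(p j).eval x - (p j).eval t| := by
        rw [hN]
        have := abs_sub_abs_le_abs_sub ((p j).eval x) ((p j).eval t)
        linarith
      rw [h2] at h1
      linarith
    -- integral lower bound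
    have hint2 : IntervalIntegrable (fun t => ((p j).eval t)^2) volume a b :=
      ((p j).continuous.pow 2).intervalIntegrable _ _
    have hlow2 : δ * (N/2)^2 ≤ ∫ t in a..b, ((p j).eval t)^2 := by
      have := intervalIntegral.integral_mono_on (by linarith : a ≤ b)
        (intervalIntegrable_const : IntervalIntegrable (fun _ => (N/2)^2) volume a b) hint2
        (fun t ht => by
          have := hlower t ht
          calc (N/2)^2 ≤ |(p j).eval t|^2 := by
                apply pow_le_pow_left₀ (by positivity) this
            _ = ((p j).eval t)^2 := sq_abs _)
      rw [intervalIntegral.integral_const, smul_eq_mul, hab] at this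
      linarith
    have hsplit : ∫ t in a..b, ((p j).eval t)^2 ≤ ∫ t in (0:ℝ)..1, ((p j).eval t)^2 := by
      have i1 : IntervalIntegrable (fun t => ((p j).eval t)^2) volume 0 a :=
        ((p j).continuous.pow 2).intervalIntegrable _ _
      have i2 : IntervalIntegrable (fun t => ((p j).eval t)^2) volume b 1 :=
        ((p j).continuous.pow 2).intervalIntegrable _ _
      have e1 : (∫ t in (0:ℝ)..a, ((p j).eval t)^2) + (∫ t in a..b, ((p j).eval t)^2)
          = ∫ t in (0:ℝ)..b, ((p j).eval t)^2 :=
        intervalIntegral.integral_add_adjacent_intervals i1 hint2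
      have e2 : (∫ t in (0:ℝ)..b, ((p j).eval t)^2) + (∫ t in b..1, ((p j).eval t)^2)
          = ∫ t in (0:ℝ)..1, ((p j).eval t)^2 :=
        intervalIntegral.integral_add_adjacent_intervals (i1.trans hint2) i2
      have n1 : 0 ≤ ∫ t in (0:ℝ)..a, ((p j).eval t)^2 :=
        intervalIntegral.integral_nonneg haI (fun u _ => sq_nonneg _)
      have n2 : 0 ≤ ∫ t in b..1, ((p j).eval t)^2 :=
        intervalIntegral.integral_nonneg hbI (fun u _ => sq_nonneg _)
      linarith
    -- conclude
    have hHj : Hinv j j ≤ 24^m * N := by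
      have := hcoef (j:ℕ)
      rw [hp, pol_coeff] at this
      calc Hinv j j ≤ |Hinv j j| := le_abs_self _
        _ ≤ 24^m * N := this
    have hchain : δ * (N/2)^2 ≤ 24^m * N := by
      rw [← hSsq] at hHj
      linarith
    -- N ≤ 8 K 24^m
    have hNle : N ≤ 8 * K * 24^m := by
      rcases eq_or_lt_of_le hN0 with h | h
      · rw [← h]; positivity
      · have hKpos : (0:ℝ) < K := by linarith
        have expand : δ * (N/2)^2 = N * N / (8 * K) := by
          rw [hδ]; field_simp; ring
        rw [expand] at hchain
        rw [div_le_iff₀ (by linarith)] at hchain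
        have := mul_le_mul_of_nonneg_right hchain (le_of_lt (inv_pos.mpr h))
        calc N = N * N * N⁻¹ := by field_simp
          _ ≤ 24^m * (8*K) * N⁻¹ * N := by
              nlinarith [inv_pos.mpr h]
          _ = 8 * K * 24^m := by field_simp
    refine le_trans hNle ?_
    -- 8 K 24^m ≤ 18432^m
    have hm2 : (m:ℝ) ≤ 2^m := by
      exact_mod_cast ((Nat.lt_two_pow_self (n := m))).le
    have hm12 : (m:ℝ)+1 ≤ 2^m := by
      have : (m+1 : ℕ) ≤ 2^m := (Nat.lt_two_pow_self (n := m))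
      exact_mod_cast this
    have h8 : (8:ℝ) ≤ 8^m := le_self_pow₀ (by norm_num) (by omega)
    calc 8 * K * 24^m = 8 * ((m:ℝ) * ((m:ℝ)+1)) * (24^m * 24^m) := by rw [hK]; ring
      _ ≤ 8^m * (2^m * 2^m) * (24^m * 24^m) := by
          apply mul_le_mul
          · apply mul_le_mul h8 _ (by positivity) (by positivity)
            apply mul_le_mul hm2 hm12 (by positivity) (by positivity)
          · exact le_refl _
          · positivity
          · positivity
      _ = 18432^m := by
          rw [← mul_pow, ← mul_pow, ← mul_pow, ← mul_pow]
          norm_num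
end
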